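/- arXiv:2208.11966 — 2 statements merged into one kernel-verified Lean document; each statement's English description precedes it below -/
import Mathlib

section
/- Each z_{i,j} is a monomial x^{d_{i,j}} in ℛ for a unique exponent vector d_{i,j} : Q_1 → ℕ. Let Φ be the ℤ-linear map from the free abelian group on the index set {(0,0)} ∪ {(i,j) : 1 ≤ i ≤ m, 0 ≤ j ≤ s_i} ∪ {(m+1,0)} to the free abelian group ℤ^{Q_1}, sending the basis element e_{i,j} to d_{i,j}. Then the kernel of Φ is generated as an abelian group by the m vectors v_j for 2 ≤ j ≤ m+1, where v_j := e_{0,0} + e_{j,s_j} − e_{1,s_1} − Σ_{t=1}^{j−1}(e_{t,1} + e_{t,2} + ⋯ + e_{t,s_t−1}) − e_{j−1,0} (the exponent vector of the quasiminor relation 𝗓_{0,0}𝗓_{j,s_j} = 𝗓_{1,s_1}(∏_{t=1}^{j−1} 𝗓_{t,1}⋯𝗓_{t,s_t−1})𝗓_{j−1,0}). -/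
open MvPolynomial

/-- Hirzebruch–Jung continued fraction `[γ_1,…,γ_s] = γ_1 − 1/(γ_2 − 1/(⋯ − 1/γ_s))`
(with the Mathlib convention `1/0 = 0`, so that `hjcf [γ] = γ`). -/
def hjcf : List ℚ → ℚ
  | [] => 0
  | g :: rest => g - 1 / hjcf rest

/-- Arrows of the quiver of the reconstruction algebra of type `A`:
`Sum.inl v` is the clockwise arrow `c_{v,v-1} : v → v−1` (`c_{0,n} : 0 → n` for `v = 0`),
`Sum.inr (Sum.inl v)` is the anticlockwise arrow `a_{v,v+1} : v → v+1` (`a_{n,0}` for `v = n`),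
`Sum.inr (Sum.inr h)` is the extra arrow `k_{h+1} : l_{h+1} → 0`. -/
abbrev Arrow (n ℓ : ℕ) : Type := Fin (n + 1) ⊕ (Fin (n + 1) ⊕ Fin ℓ)

open Fin.NatCast in
/-- The clockwise arrow `c_{v,v−1}` (indices mod `n+1`). -/
def cc (n ℓ : ℕ) (v : ℕ) : Arrow n ℓ := Sum.inl (v : Fin (n + 1))

open Fin.NatCast in
/-- The anticlockwise arrow `a_{v,v+1}` (indices mod `n+1`). -/
def aa (n ℓ : ℕ) (v : ℕ) : Arrow n ℓ := Sum.inr (Sum.inl (v : Fin (n + 1)))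

/-- The arrow `k_h`, with the conventions `k_0 = c_{1,0}` and `k_h = a_{n,0}` for `h > ℓ`
(in particular `k_{ℓ+1} = a_{n,0}`). -/
def kArr (n ℓ : ℕ) (h : ℕ) : Arrow n ℓ :=
  if hh : 1 ≤ h ∧ h ≤ ℓ then Sum.inr (Sum.inr ⟨h - 1, by omega⟩)
  else if h = 0 then cc n ℓ 1 else aa n ℓ n

open Fin.NatCast in
/-- Tail vertex of an arrow, where `L h` is the tail of `k_h`. -/
def tl (n ℓ : ℕ) (L : ℕ → ℕ) : Arrow n ℓ → Fin (n + 1)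
  | Sum.inl v => v
  | Sum.inr (Sum.inl v) => v
  | Sum.inr (Sum.inr h) => ((L (h.val + 1) : ℕ) : Fin (n + 1))

open Fin.NatCast in
/-- Head vertex of an arrow. -/
def hd (n ℓ : ℕ) : Arrow n ℓ → Fin (n + 1)
  | Sum.inl v => ((v.val + n : ℕ) : Fin (n + 1))
  | Sum.inr (Sum.inl v) => ((v.val + 1 : ℕ) : Fin (n + 1))
  | Sum.inr (Sum.inr _) => 0

/-- The action of a torus element `μ ∈ G = (ℂ*)^{Q_0}` on
`ℛ = ℂ[x_q : q ∈ Q_1]`, via `μ · x_q = μ_{t q}⁻¹ μ_{h q} x_q`. -/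
noncomputable def torusAct (n ℓ : ℕ) (L : ℕ → ℕ) (μ : Fin (n + 1) → ℂˣ) :
    MvPolynomial (Arrow n ℓ) ℂ →ₐ[ℂ] MvPolynomial (Arrow n ℓ) ℂ :=
  aeval fun q => C ((μ (tl n ℓ L q) : ℂ)⁻¹ * (μ (hd n ℓ q) : ℂ)) * X q

/-- The invariant subalgebra `ℛ^G`. -/
noncomputable def invAlg (n ℓ : ℕ) (L : ℕ → ℕ) :
    Subalgebra ℂ (MvPolynomial (Arrow n ℓ) ℂ) where
  carrier := {f | ∀ μ, torusAct n ℓ L μ f = f}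
  mul_mem' := fun ha hb μ => by rw [map_mul, ha μ, hb μ]
  add_mem' := fun ha hb μ => by rw [map_add, ha μ, hb μ]
  algebraMap_mem' := fun c μ => (torusAct n ℓ L μ).commutes c

/-- `x_{C_{0,j}}`: the monomial of the clockwise path from `0` to `j`
(for `j = 0` this is the full clockwise loop `C_{0,0}`). -/
noncomputable def xC0 (n ℓ : ℕ) (j : ℕ) : MvPolynomial (Arrow n ℓ) ℂ :=
  X (cc n ℓ 0) * ∏ v ∈ Finset.Icc (j + 1) n, X (cc n ℓ v)

/-- `x_{A_{0,j}}`: the monomial of the anticlockwise path from `0` to `j` (for `j ≥ 1`). -/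
noncomputable def xA0 (n ℓ : ℕ) (j : ℕ) : MvPolynomial (Arrow n ℓ) ℂ :=
  ∏ v ∈ Finset.range j, X (aa n ℓ v)

/-- The cycle monomials `z_{i,j}`: `z_{0,0} = x_{C_{0,0}}`; for `1 ≤ i ≤ e−2 = ℓ+1`:
`z_{i,0} = x_{C_{0,l_i}}·x_{k_i}`, `z_{i,s_i} = x_{A_{0,l_{i−1}}}·x_{k_{i−1}}`
(where `s_i = l_i − l_{i−1} + 1`), and
`z_{i,j} = x_{c_{l_i−j+1,l_i−j}}·x_{a_{l_i−j,l_i−j+1}}` for `1 ≤ j ≤ l_i − l_{i−1}`;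
finally `z_{e−1,0} = z_{ℓ+2,0} = x_{A_{0,0}}`. -/
noncomputable def zmon (n ℓ : ℕ) (L : ℕ → ℕ) (i j : ℕ) : MvPolynomial (Arrow n ℓ) ℂ :=
  if i = 0 then ∏ v ∈ Finset.range (n + 1), X (cc n ℓ v)
  else if i = ℓ + 2 then ∏ v ∈ Finset.range (n + 1), X (aa n ℓ v)
  else if j = 0 then xC0 n ℓ (L i) * X (kArr n ℓ i)
  else if j = L i - L (i - 1) + 1 then xA0 n ℓ (L (i - 1)) * X (kArr n ℓ (i - 1))
  else X (cc n ℓ (L i - j + 1)) * X (aa n ℓ (L i - j))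

/-- Number of `j`-indices of the variables `𝗓_{i,j}` in row `i`: one variable `𝗓_{0,0}`
for `i = 0`, one variable `𝗓_{m+1,0}` for `i = m+1`, and `s_i + 1` variables
`𝗓_{i,0},…,𝗓_{i,s_i}` for `1 ≤ i ≤ m`. -/
def nj (m : ℕ) (s : ℕ → ℕ) (i : ℕ) : ℕ := if i = 0 ∨ i = m + 1 then 1 else s i + 1

/-- The index type of the variables of the polynomial ring `ℂ[𝗓]`. -/
abbrev ZIdx (m : ℕ) (s : ℕ → ℕ) : Type := Σ i : Fin (m + 2), Fin (nj m s i.val)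

/-- The variable index `(i,j)` (with a junk value for out-of-range indices). -/
def zidx (m : ℕ) (s : ℕ → ℕ) (i j : ℕ) : ZIdx m s :=
  if h : i < m + 2 ∧ j < nj m s i then ⟨⟨i, h.1⟩, ⟨j, h.2⟩⟩
  else ⟨⟨0, by omega⟩, ⟨0, by simp [nj]⟩⟩

/-- The polynomial ring `ℂ[𝗓]`. -/
abbrev CZ (m : ℕ) (s : ℕ → ℕ) : Type := MvPolynomial (ZIdx m s) ℂ

/-- The variable `𝗓_{i,j}`. -/
noncomputable def Zv (m : ℕ) (s : ℕ → ℕ) (i j : ℕ) : CZ m s := X (zidx m s i j)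

/-- `W_t = 𝗓_{t,1}·𝗓_{t,2}⋯𝗓_{t,s_t−1}`. -/
noncomputable def Wq (m : ℕ) (s : ℕ → ℕ) (t : ℕ) : CZ m s :=
  ∏ u ∈ Finset.Icc 1 (s t - 1), Zv m s t u

/-- The quasiminor `q_{i,j} = 𝗓_{i−1,0}·𝗓_{j,s_j} − 𝗓_{i,s_i}·(∏_{t=i}^{j−1} W_t)·𝗓_{j−1,0}`. -/
noncomputable def qm (m : ℕ) (s : ℕ → ℕ) (i j : ℕ) : CZ m s :=
  Zv m s (i - 1) 0 * Zv m s j (s j)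
    - Zv m s i (s i) * (∏ t ∈ Finset.Icc i (j - 1), Wq m s t) * Zv m s (j - 1) 0

/-- The quasideterminantal ideal `QDet(𝗓)`, generated by the quasiminors `q_{i,j}`
for `1 ≤ i < j ≤ m+1`. -/
noncomputable def QDet (m : ℕ) (s : ℕ → ℕ) : Ideal (CZ m s) :=
  Ideal.span {q | ∃ i j : ℕ, 1 ≤ i ∧ i < j ∧ j ≤ m + 1 ∧ q = qm m s i j}

/-- `s_t = β_t − 1` for `1 ≤ t ≤ m` and `s_{m+1} = 0`. -/
def sfun (m : ℕ) (β : ℕ → ℕ) (t : ℕ) : ℕ := if t ≤ m then β t - 1 else 0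

/-- `E = 𝗓_{0,0}·𝗓_{2,s_2}·𝗓_{3,s_3}⋯𝗓_{m+1,s_{m+1}}`. -/
noncomputable def Emon (m : ℕ) (s : ℕ → ℕ) : CZ m s :=
  Zv m s 0 0 * ∏ t ∈ Finset.Icc 2 (m + 1), Zv m s t (s t)

/-- The ℤ-linear map `Φ` from the free abelian group on the variable index set of `ℂ[𝗓]`
to `ℤ^{Q_1}`, sending the basis element `e_{i,j}` to the exponent vector `d_{i,j}`. -/
noncomputable def PhiMap (n ℓ m : ℕ) (s : ℕ → ℕ)
    (d : ZIdx m s → (Arrow n ℓ →₀ ℕ)) :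
    (ZIdx m s →₀ ℤ) →ₗ[ℤ] (Arrow n ℓ → ℤ) :=
  Finsupp.lsum ℤ fun p =>
    LinearMap.toSpanSingleton ℤ (Arrow n ℓ → ℤ) (fun q => ((d p q : ℕ) : ℤ))

/-- The exponent vector `v_j` (for `2 ≤ j ≤ m+1`) of the quasiminor relation
`𝗓_{0,0}𝗓_{j,s_j} = 𝗓_{1,s_1}(∏_{t=1}^{j−1} 𝗓_{t,1}⋯𝗓_{t,s_t−1})𝗓_{j−1,0}`, namely
`v_j = e_{0,0} + e_{j,s_j} − e_{1,s_1} − Σ_{t=1}^{j−1}(e_{t,1}+⋯+e_{t,s_t−1}) − e_{j−1,0}`. -/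
noncomputable def vRel (m : ℕ) (s : ℕ → ℕ) (j : ℕ) : ZIdx m s →₀ ℤ :=
  Finsupp.single (zidx m s 0 0) 1 + Finsupp.single (zidx m s j (s j)) 1
    - Finsupp.single (zidx m s 1 (s 1)) 1
    - (∑ t ∈ Finset.Icc 1 (j - 1), ∑ u ∈ Finset.Icc 1 (s t - 1),
        Finsupp.single (zidx m s t u) 1)
    - Finsupp.single (zidx m s (j - 1) 0) 1

section Aux

open Finset

/-- The exponent vector of `zmon n ℓ L i j`. -/
noncomputable def Dvec (n ℓ : ℕ) (L : ℕ → ℕ) (i j : ℕ) : Arrow n ℓ →₀ ℕ :=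
  if i = 0 then ∑ v ∈ Finset.range (n + 1), Finsupp.single (cc n ℓ v) 1
  else if i = ℓ + 2 then ∑ v ∈ Finset.range (n + 1), Finsupp.single (aa n ℓ v) 1
  else if j = 0 then
    (Finsupp.single (cc n ℓ 0) 1 + ∑ v ∈ Finset.Icc (L i + 1) n, Finsupp.single (cc n ℓ v) 1)
      + Finsupp.single (kArr n ℓ i) 1
  else if j = L i - L (i - 1) + 1 then
    (∑ v ∈ Finset.range (L (i - 1)), Finsupp.single (aa n ℓ v) 1)
      + Finsupp.single (kArr n ℓ (i - 1)) 1
  else Finsupp.single (cc n ℓ (L i - j + 1)) 1 + Finsupp.single (aa n ℓ (L i - j)) 1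

lemma prodX {γ σ : Type*} (t : Finset γ) (f : γ → σ) :
    (∏ v ∈ t, (X (f v) : MvPolynomial σ ℂ))
      = monomial (∑ v ∈ t, Finsupp.single (f v) 1) 1 := by
  induction t using Finset.cons_induction with
  | empty => simp
  | cons a t ha ih =>
      rw [Finset.prod_cons, Finset.sum_cons, ih, MvPolynomial.X, monomial_mul, one_mul]

lemma zmon_eq_monomial (n ℓ : ℕ) (L : ℕ → ℕ) (i j : ℕ) :
    zmon n ℓ L i j = monomial (Dvec n ℓ L i j) 1 := by
  unfold zmon Dvec
  split_ifs with h0 h1 h2 h3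
  · exact prodX _ _
  · exact prodX _ _
  · rw [xC0, prodX, MvPolynomial.X, MvPolynomial.X, monomial_mul, monomial_mul]
    norm_num
  · rw [xA0, prodX, MvPolynomial.X, monomial_mul, one_mul]
  · rw [MvPolynomial.X, MvPolynomial.X, monomial_mul, one_mul]

end Aux
section Aux2
open Finset

lemma cc_ne_aa (n ℓ v w : ℕ) : cc n ℓ v ≠ aa n ℓ w := by simp [cc, aa]

open Fin.NatCast in
lemma cc_eq_cc_iff {n : ℕ} (ℓ : ℕ) {v w : ℕ} (hv : v ≤ n) (hw : w ≤ n) :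
    cc n ℓ v = cc n ℓ w ↔ v = w := by
  constructor
  · intro h
    have h' : (v : Fin (n+1)) = (w : Fin (n+1)) := Sum.inl.inj h
    have := congrArg Fin.val h'
    rwa [Fin.val_cast_of_lt (by omega), Fin.val_cast_of_lt (by omega)] at this
  · rintro rfl; rfl

open Fin.NatCast in
lemma aa_eq_aa_iff {n : ℕ} (ℓ : ℕ) {v w : ℕ} (hv : v ≤ n) (hw : w ≤ n) :
    aa n ℓ v = aa n ℓ w ↔ v = w := by
  constructor
  · intro h
    have h' : (v : Fin (n+1)) = (w : Fin (n+1)) := Sum.inl.inj (Sum.inr.inj h)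
    have := congrArg Fin.val h'
    rwa [Fin.val_cast_of_lt (by omega), Fin.val_cast_of_lt (by omega)] at this
  · rintro rfl; rfl

lemma kArr_zero (n ℓ : ℕ) : kArr n ℓ 0 = cc n ℓ 1 := by simp [kArr]

lemma kArr_mid (n : ℕ) {ℓ h : ℕ} (h1 : 1 ≤ h) (h2 : h ≤ ℓ) :
    kArr n ℓ h = Sum.inr (Sum.inr ⟨h - 1, by omega⟩) := by
  rw [kArr, dif_pos ⟨h1, h2⟩]

lemma kArr_top (n : ℕ) {ℓ h : ℕ} (hh : ℓ < h) : kArr n ℓ h = aa n ℓ n := by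
  rw [kArr, dif_neg (by omega), if_neg (by omega)]

lemma zidx_eq (m : ℕ) (s : ℕ → ℕ) {i j : ℕ} (hi : i < m + 2) (hj : j < nj m s i) :
    zidx m s i j = ⟨⟨i, hi⟩, ⟨j, hj⟩⟩ := dif_pos ⟨hi, hj⟩

lemma zidx_inj (m : ℕ) (s : ℕ → ℕ) {i j i' j' : ℕ} (hi : i < m + 2) (hj : j < nj m s i)
    (hi' : i' < m + 2) (hj' : j' < nj m s i') :
    zidx m s i j = zidx m s i' j' ↔ i = i' ∧ j = j' := by
  rw [zidx_eq m s hi hj, zidx_eq m s hi' hj']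
  constructor
  · intro h
    have h1 : i = i' := congrArg (fun p : ZIdx m s => (p.1 : ℕ)) h
    have h2 : j = j' := congrArg (fun p : ZIdx m s => (p.2 : ℕ)) h
    exact ⟨h1, h2⟩
  · rintro ⟨rfl, rfl⟩; rfl

lemma nj_pos (m : ℕ) (s : ℕ → ℕ) (i : ℕ) : 0 < nj m s i := by
  unfold nj; split_ifs <;> omega

lemma sum_zidx {M : Type*} [AddCommMonoid M] (m : ℕ) (s : ℕ → ℕ) (g : ZIdx m s → M) :
    ∑ p : ZIdx m s, g p
      = ∑ i ∈ Finset.range (m + 2), ∑ j ∈ Finset.range (nj m s i), g (zidx m s i j) := by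
  rw [← Finset.univ_sigma_univ, Finset.sum_sigma]
  rw [← Fin.sum_univ_eq_sum_range
    (fun i => ∑ j ∈ Finset.range (nj m s i), g (zidx m s i j)) (m + 2)]
  refine Finset.sum_congr rfl fun i _ => ?_
  rw [← Fin.sum_univ_eq_sum_range (fun j => g (zidx m s (i : ℕ) j)) (nj m s i)]
  refine Finset.sum_congr rfl fun j _ => ?_
  congr 1
  rw [zidx_eq m s i.isLt j.isLt]

lemma phi_apply (n ℓ m : ℕ) (s : ℕ → ℕ) (d : ZIdx m s → (Arrow n ℓ →₀ ℕ))
    (x : ZIdx m s →₀ ℤ) (q : Arrow n ℓ) :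
    PhiMap n ℓ m s d x q
      = ∑ i ∈ Finset.range (m + 2), ∑ j ∈ Finset.range (nj m s i),
          x (zidx m s i j) * ((d (zidx m s i j)) q : ℤ) := by
  rw [← sum_zidx m s (fun p => x p * ((d p) q : ℤ))]
  rw [PhiMap, Finsupp.lsum_apply]
  rw [Finsupp.sum_fintype]
  · rw [show ((∑ p : ZIdx m s,
        (LinearMap.toSpanSingleton ℤ (Arrow n ℓ → ℤ) (fun q => ((d p q : ℕ) : ℤ))) (x p)) q)
      = ∑ p : ZIdx m s,
        ((LinearMap.toSpanSingleton ℤ (Arrow n ℓ → ℤ) (fun q => ((d p q : ℕ) : ℤ))) (x p)) q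
      from by rw [Finset.sum_apply]]
    refine Finset.sum_congr rfl fun p _ => ?_
    rw [LinearMap.toSpanSingleton_apply]
    simp [mul_comm]
  · intro p; simp

end Aux2
section Aux3
open Finset

variable {n ℓ : ℕ} {L : ℕ → ℕ}

lemma sum_aa_apply_aa (K w : ℕ) (hK : K ≤ n + 1) (hw : w ≤ n) :
    (∑ v ∈ range K, Finsupp.single (aa n ℓ v) (1 : ℕ)) (aa n ℓ w)
      = if w < K then 1 else 0 := by
  rw [Finsupp.finset_sum_apply]
  rw [Finset.sum_congr rfl (fun v hv => ?_), Finset.sum_ite_eq' (range K) w (fun _ => 1)]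
  · simp
  · rw [Finsupp.single_apply]
    have hv' : v ≤ n := by have := mem_range.mp hv; omega
    simp only [aa_eq_aa_iff ℓ hv' hw]

lemma sum_aa_apply_inl (K : ℕ) (f : Fin (n+1)) :
    (∑ v ∈ range K, Finsupp.single (aa n ℓ v) (1 : ℕ)) (Sum.inl f) = 0 := by
  rw [Finsupp.finset_sum_apply]
  exact Finset.sum_eq_zero fun v _ => by simp [Finsupp.single_apply, aa]

lemma sum_aa_apply_ex (K : ℕ) (f : Fin ℓ) :
    (∑ v ∈ range K, Finsupp.single (aa n ℓ v) (1 : ℕ)) (Sum.inr (Sum.inr f)) = 0 := by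
  rw [Finsupp.finset_sum_apply]
  exact Finset.sum_eq_zero fun v _ => by simp [Finsupp.single_apply, aa]

lemma sum_cc_apply_inr (S : Finset ℕ) (f : Fin (n+1) ⊕ Fin ℓ) :
    (∑ v ∈ S, Finsupp.single (cc n ℓ v) (1 : ℕ)) (Sum.inr f) = 0 := by
  rw [Finsupp.finset_sum_apply]
  exact Finset.sum_eq_zero fun v _ => by simp [Finsupp.single_apply, cc]

lemma sum_cc_range_apply_cc0 :
    (∑ v ∈ range (n + 1), Finsupp.single (cc n ℓ v) (1 : ℕ)) (cc n ℓ 0) = 1 := by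
  rw [Finsupp.finset_sum_apply]
  rw [Finset.sum_congr rfl (fun v hv => ?_), Finset.sum_ite_eq' (range (n+1)) 0 (fun _ => 1)]
  · simp
  · rw [Finsupp.single_apply]
    have hv' : v ≤ n := by have := mem_range.mp hv; omega
    simp only [cc_eq_cc_iff ℓ hv' (Nat.zero_le n)]

lemma sum_cc_Icc_apply_cc0 (K : ℕ) :
    (∑ v ∈ Icc (K + 1) n, Finsupp.single (cc n ℓ v) (1 : ℕ)) (cc n ℓ 0) = 0 := by
  rw [Finsupp.finset_sum_apply]
  refine Finset.sum_eq_zero fun v hv => ?_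
  have hv' := mem_Icc.mp hv
  rw [Finsupp.single_apply, if_neg]
  rw [cc_eq_cc_iff ℓ (by omega) (Nat.zero_le n)]
  omega

/-! Evaluations of `Dvec` rows at the arrows used in the elimination. -/

-- Row `i = 0`
lemma D00_aa (w : ℕ) : Dvec n ℓ L 0 0 (aa n ℓ w) = 0 := by
  rw [Dvec, if_pos rfl]; exact sum_cc_apply_inr _ _

lemma D00_ex (f : Fin ℓ) : Dvec n ℓ L 0 0 (Sum.inr (Sum.inr f)) = 0 := by
  rw [Dvec, if_pos rfl]; exact sum_cc_apply_inr _ _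

lemma D00_c0 : Dvec n ℓ L 0 0 (cc n ℓ 0) = 1 := by
  rw [Dvec, if_pos rfl]; exact sum_cc_range_apply_cc0

-- Row `i = ℓ + 2`
lemma Dtop_aa (w : ℕ) (hw : w ≤ n) : Dvec n ℓ L (ℓ + 2) 0 (aa n ℓ w) = 1 := by
  rw [Dvec, if_neg (by omega), if_pos rfl, sum_aa_apply_aa _ _ le_rfl hw, if_pos (by omega)]

lemma Dtop_ex (f : Fin ℓ) : Dvec n ℓ L (ℓ + 2) 0 (Sum.inr (Sum.inr f)) = 0 := by
  rw [Dvec, if_neg (by omega), if_pos rfl]; exact sum_aa_apply_ex _ _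

lemma Dtop_c0 : Dvec n ℓ L (ℓ + 2) 0 (cc n ℓ 0) = 0 := by
  rw [Dvec, if_neg (by omega), if_pos rfl]; exact sum_aa_apply_inl _ _

-- Row `1 ≤ i ≤ ℓ + 1`, `j = 0`
lemma Di0_aa {i : ℕ} (hi1 : 1 ≤ i) (him : i ≤ ℓ + 1) (w : ℕ) (hw : w ≤ n) :
    Dvec n ℓ L i 0 (aa n ℓ w) = if i = ℓ + 1 ∧ w = n then 1 else 0 := by
  rw [Dvec, if_neg (by omega), if_neg (by omega), if_pos rfl]
  rw [Finsupp.add_apply, Finsupp.add_apply]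
  rw [show (Finsupp.single (cc n ℓ 0) (1:ℕ)) (aa n ℓ w) = 0 from by
    simp [Finsupp.single_apply, cc, aa]]
  rw [show (∑ v ∈ Icc (L i + 1) n, Finsupp.single (cc n ℓ v) (1:ℕ)) (aa n ℓ w) = 0 from by
    rw [Finsupp.finset_sum_apply]
    exact Finset.sum_eq_zero fun v _ => by simp [Finsupp.single_apply, cc, aa]]
  by_cases hiℓ : i ≤ ℓ
  · rw [kArr_mid n hi1 hiℓ]
    rw [show (Finsupp.single (Sum.inr (Sum.inr ⟨i-1, by omega⟩) : Arrow n ℓ) (1:ℕ))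
        (aa n ℓ w) = 0 from by simp [Finsupp.single_apply, aa]]
    rw [if_neg (by omega)]
  · have : i = ℓ + 1 := by omega
    subst this
    rw [kArr_top n (by omega), Finsupp.single_apply]
    by_cases hwn : w = n
    · subst hwn; rw [if_pos rfl, if_pos ⟨rfl, rfl⟩]
    · rw [if_neg, if_neg (by omega)]
      · simp
      · rw [aa_eq_aa_iff ℓ le_rfl hw]; omega

lemma Di0_ex {i : ℕ} (hi1 : 1 ≤ i) (him : i ≤ ℓ + 1) (f : Fin ℓ) :
    Dvec n ℓ L i 0 (Sum.inr (Sum.inr f)) = if i = f.val + 1 then 1 else 0 := by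
  rw [Dvec, if_neg (by omega), if_neg (by omega), if_pos rfl]
  rw [Finsupp.add_apply, Finsupp.add_apply, sum_cc_apply_inr]
  rw [show (Finsupp.single (cc n ℓ 0) (1:ℕ)) (Sum.inr (Sum.inr f)) = 0 from by
    simp [Finsupp.single_apply, cc]]
  by_cases hiℓ : i ≤ ℓ
  · rw [kArr_mid n hi1 hiℓ, Finsupp.single_apply]
    by_cases hif : i = f.val + 1
    · have hfi : (⟨i - 1, by omega⟩ : Fin ℓ) = f := Fin.ext (by simp; omega)
      rw [if_pos (by rw [hfi]), if_pos hif]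
    · rw [if_neg, if_neg hif]
      · simp
      · intro hcon
        have := congrArg (fun x : Arrow n ℓ => ((Sum.getRight? x).bind Sum.getRight?)) hcon
        simp at this
        have := congrArg Fin.val this
        simp at this; omega
  · have : i = ℓ + 1 := by omega
    subst this
    rw [kArr_top n (by omega)]
    rw [show (Finsupp.single (aa n ℓ n) (1:ℕ)) (Sum.inr (Sum.inr f)) = 0 from by
      simp [Finsupp.single_apply, aa]]
    rw [if_neg (by have := f.isLt; omega)]

lemma Di0_c0 {i : ℕ} (hi1 : 1 ≤ i) (him : i ≤ ℓ + 1) (hn1 : 1 ≤ n) :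
    Dvec n ℓ L i 0 (cc n ℓ 0) = 1 := by
  rw [Dvec, if_neg (by omega), if_neg (by omega), if_pos rfl]
  rw [Finsupp.add_apply, Finsupp.add_apply, sum_cc_Icc_apply_cc0]
  rw [Finsupp.single_apply, if_pos rfl]
  rw [show (Finsupp.single (kArr n ℓ i) (1:ℕ)) (cc n ℓ 0) = 0 from ?_]
  · by_cases hiℓ : i ≤ ℓ
    · rw [kArr_mid n hi1 hiℓ]; simp [Finsupp.single_apply, cc]
    · rw [kArr_top n (by omega)]; simp [Finsupp.single_apply, cc, aa]

end Aux3
section Aux4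
open Finset

variable {n ℓ : ℕ} {L : ℕ → ℕ}

-- Row `1 ≤ i ≤ ℓ + 1`, `j = s i = L i - L (i-1) + 1`
lemma Dis_aa {i : ℕ} (hi1 : 1 ≤ i) (him : i ≤ ℓ + 1) (hub : L (i - 1) ≤ n)
    (w : ℕ) (hw : w ≤ n) :
    Dvec n ℓ L i (L i - L (i - 1) + 1) (aa n ℓ w) = if w < L (i - 1) then 1 else 0 := by
  rw [Dvec, if_neg (by omega), if_neg (by omega), if_neg (by omega), if_pos rfl]
  rw [Finsupp.add_apply, sum_aa_apply_aa _ _ (by omega) hw]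
  rw [show (Finsupp.single (kArr n ℓ (i - 1)) (1:ℕ)) (aa n ℓ w) = 0 from ?_, add_zero]
  by_cases hi2 : 2 ≤ i
  · rw [kArr_mid n (by omega) (by omega)]; simp [Finsupp.single_apply, aa]
  · have : i = 1 := by omega
    subst this
    simp only [Nat.sub_self]
    rw [kArr_zero]; simp [Finsupp.single_apply, cc, aa]

lemma Dis_ex {i : ℕ} (hi1 : 1 ≤ i) (him : i ≤ ℓ + 1) (f : Fin ℓ) :
    Dvec n ℓ L i (L i - L (i - 1) + 1) (Sum.inr (Sum.inr f))
      = if i = f.val + 2 then 1 else 0 := by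
  rw [Dvec, if_neg (by omega), if_neg (by omega), if_neg (by omega), if_pos rfl]
  rw [Finsupp.add_apply, sum_aa_apply_ex]
  by_cases hi2 : 2 ≤ i
  · rw [kArr_mid n (by omega) (by omega), Finsupp.single_apply]
    by_cases hif : i = f.val + 2
    · have hfi : (⟨i - 1 - 1, by omega⟩ : Fin ℓ) = f := Fin.ext (by simp; omega)
      rw [if_pos (by rw [hfi]), if_pos hif]
    · have hne : (Sum.inr (Sum.inr (⟨i - 1 - 1, by omega⟩ : Fin ℓ)) : Arrow n ℓ)
          ≠ Sum.inr (Sum.inr f) := by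
        simp only [ne_eq, Sum.inr.injEq]
        intro hcon
        have := congrArg Fin.val hcon
        simp at this; omega
      rw [if_neg hne, if_neg hif]
      rfl
  · have : i = 1 := by omega
    subst this
    simp only [Nat.sub_self]
    rw [kArr_zero]
    rw [show (Finsupp.single (cc n ℓ 1) (1:ℕ)) (Sum.inr (Sum.inr f)) = 0 from by
      simp [Finsupp.single_apply, cc]]
    rw [if_neg (by omega)]

lemma Dis_c0 {i : ℕ} (hi1 : 1 ≤ i) (him : i ≤ ℓ + 1) (hn1 : 1 ≤ n) :
    Dvec n ℓ L i (L i - L (i - 1) + 1) (cc n ℓ 0) = 0 := by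
  rw [Dvec, if_neg (by omega), if_neg (by omega), if_neg (by omega), if_pos rfl]
  rw [Finsupp.add_apply,
    show (∑ v ∈ range (L (i - 1)), Finsupp.single (aa n ℓ v) (1:ℕ)) (cc n ℓ 0) = 0 from
      sum_aa_apply_inl _ _, zero_add]
  by_cases hi2 : 2 ≤ i
  · rw [kArr_mid n (by omega) (by omega)]; simp [Finsupp.single_apply, cc]
  · have : i = 1 := by omega
    subst this
    simp only [Nat.sub_self]
    rw [kArr_zero, Finsupp.single_apply, if_neg]
    rw [cc_eq_cc_iff ℓ (by omega) (Nat.zero_le n)]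
    omega

-- Row `1 ≤ i ≤ ℓ + 1`, middle `1 ≤ u ≤ L i - L (i-1)`
lemma Dmid_aa {i u : ℕ} (hi1 : 1 ≤ i) (him : i ≤ ℓ + 1) (hu1 : 1 ≤ u)
    (huu : u ≤ L i - L (i - 1)) (hub : L i ≤ n) (w : ℕ) (hw : w ≤ n) :
    Dvec n ℓ L i u (aa n ℓ w) = if L i - u = w then 1 else 0 := by
  rw [Dvec, if_neg (by omega), if_neg (by omega), if_neg (by omega), if_neg (by omega)]
  rw [Finsupp.add_apply]
  rw [show (Finsupp.single (cc n ℓ (L i - u + 1)) (1:ℕ)) (aa n ℓ w) = 0 from by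
    simp [Finsupp.single_apply, cc, aa], zero_add]
  rw [Finsupp.single_apply]
  simp only [aa_eq_aa_iff ℓ (by omega : L i - u ≤ n) hw]

lemma Dmid_ex {i u : ℕ} (hi1 : 1 ≤ i) (him : i ≤ ℓ + 1) (hu1 : 1 ≤ u)
    (huu : u ≤ L i - L (i - 1)) (f : Fin ℓ) :
    Dvec n ℓ L i u (Sum.inr (Sum.inr f)) = 0 := by
  rw [Dvec, if_neg (by omega), if_neg (by omega), if_neg (by omega), if_neg (by omega)]
  rw [Finsupp.add_apply]
  rw [show (Finsupp.single (cc n ℓ (L i - u + 1)) (1:ℕ)) (Sum.inr (Sum.inr f)) = 0 from by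
    simp [Finsupp.single_apply, cc]]
  rw [show (Finsupp.single (aa n ℓ (L i - u)) (1:ℕ)) (Sum.inr (Sum.inr f)) = 0 from by
    simp [Finsupp.single_apply, aa]]

lemma Dmid_c0 {i u : ℕ} (hi1 : 1 ≤ i) (him : i ≤ ℓ + 1) (hu1 : 1 ≤ u)
    (huu : u ≤ L i - L (i - 1)) (hlb : 1 ≤ L (i - 1)) (hub : L i ≤ n) :
    Dvec n ℓ L i u (cc n ℓ 0) = 0 := by
  rw [Dvec, if_neg (by omega), if_neg (by omega), if_neg (by omega), if_neg (by omega)]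
  rw [Finsupp.add_apply]
  rw [show (Finsupp.single (aa n ℓ (L i - u)) (1:ℕ)) (cc n ℓ 0) = 0 from by
    simp [Finsupp.single_apply, cc, aa], add_zero]
  rw [Finsupp.single_apply, if_neg]
  rw [cc_eq_cc_iff ℓ (by omega : L i - u + 1 ≤ n) (Nat.zero_le n)]
  omega

end Aux4
section Aux5
open Finset

lemma nj_zero (m : ℕ) (s : ℕ → ℕ) : nj m s 0 = 1 := by simp [nj]

lemma nj_top (m : ℕ) (s : ℕ → ℕ) : nj m s (m + 1) = 1 := by simp [nj]

lemma nj_mid (m : ℕ) (s : ℕ → ℕ) {i : ℕ} (h1 : 1 ≤ i) (h2 : i ≤ m) :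
    nj m s i = s i + 1 := by
  rw [nj, if_neg (by omega)]

lemma double_sum_eq_single {M : Type*} [AddCommMonoid M] {N : ℕ} {fj : ℕ → ℕ}
    (F : ℕ → ℕ → M) (t u : ℕ) (ht : t < N) (hu : u < fj t)
    (h : ∀ i, i < N → ∀ j, j < fj i → F i j = if i = t ∧ j = u then F t u else 0) :
    ∑ i ∈ Finset.range N, ∑ j ∈ Finset.range (fj i), F i j = F t u := by
  have h1 : ∀ i ∈ Finset.range N, (∑ j ∈ Finset.range (fj i), F i j)
      = if i = t then F t u else 0 := by
    intro i hi
    rw [Finset.sum_congr rfl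
      (fun j hj => h i (Finset.mem_range.mp hi) j (Finset.mem_range.mp hj))]
    by_cases hit : i = t
    · subst hit
      rw [show (∑ j ∈ Finset.range (fj i), if i = i ∧ j = u then F i u else 0)
            = ∑ j ∈ Finset.range (fj i), if j = u then F i u else 0 from
          Finset.sum_congr rfl (fun j _ => by simp),
        Finset.sum_ite_eq' (Finset.range (fj i)) u (fun _ => F i u),
        if_pos (Finset.mem_range.mpr hu), if_pos rfl]
    · rw [if_neg hit]
      exact Finset.sum_eq_zero fun j hj => if_neg (by tauto)
  rw [Finset.sum_congr rfl h1, Finset.sum_ite_eq' (Finset.range N) t (fun _ => F t u),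
    if_pos (Finset.mem_range.mpr ht)]

lemma elim_y (n ℓ m : ℕ) (L s : ℕ → ℕ) (hn1 : 1 ≤ n) (hm : m = ℓ + 1)
    (hL0 : L 0 = 1) (hLtop : L m = n)
    (hmono : ∀ a b : ℕ, a ≤ b → b ≤ m → L a ≤ L b)
    (hs : ∀ t, 1 ≤ t → t ≤ m → s t = L t - L (t - 1) + 1)
    (hsm1 : s (m + 1) = 0)
    (y : ZIdx m s →₀ ℤ)
    (hK : ∀ t, 2 ≤ t → t ≤ m + 1 → y (zidx m s t (s t)) = 0)
    (hker : ∀ q : Arrow n ℓ, ∑ i ∈ Finset.range (m + 2), ∑ j ∈ Finset.range (nj m s i),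
        (y (zidx m s i j)) * ((Dvec n ℓ L i j q : ℕ) : ℤ) = 0) :
    y = 0 := by
  have hub : ∀ t, t ≤ m → L t ≤ n := fun t ht => hLtop ▸ hmono t m ht le_rfl
  have hlb : ∀ t, t ≤ m → 1 ≤ L t := fun t ht => hL0 ▸ hmono 0 t (Nat.zero_le t) ht
  have hm1 : 1 ≤ m := by omega
  have hKtop : y (zidx m s (m + 1) 0) = 0 := by
    have := hK (m + 1) (by omega) le_rfl
    rwa [hsm1] at this
  have hspos : ∀ t, 1 ≤ t → t ≤ m → 1 ≤ s t := fun t h1 h2 => by rw [hs t h1 h2]; omega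
  -- Step 1 : `y (zidx 1 (s 1)) = 0` via the arrow `a_0`.
  have step1 : y (zidx m s 1 (s 1)) = 0 := by
    have e := hker (aa n ℓ 0)
    rw [double_sum_eq_single
        (fun i j => y (zidx m s i j) * ((Dvec n ℓ L i j (aa n ℓ 0) : ℕ) : ℤ))
        1 (s 1) (by omega) (by rw [nj_mid m s le_rfl hm1]; omega) ?_] at e
    · beta_reduce at e
      have hD : Dvec n ℓ L 1 (s 1) (aa n ℓ 0) = 1 := by
        rw [hs 1 le_rfl hm1,
          Dis_aa (n:=n) (ℓ:=ℓ) (L:=L) (i:=1) le_rfl (by omega)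
            (by simpa using hub 0 (by omega)) 0 (by omega)]
        simp only [Nat.sub_self]
        rw [if_pos (by omega)]
      rw [hD] at e
      simpa using e
    · intro i hi j hj
      beta_reduce
      by_cases hi0 : i = 0
      · subst hi0
        rw [nj_zero] at hj
        have hj0 : j = 0 := by omega
        subst hj0
        rw [D00_aa, if_neg (by omega)]; simp
      by_cases hitop : i = m + 1
      · subst hitop
        rw [nj_top] at hj
        have hj0 : j = 0 := by omega
        subst hj0
        rw [hKtop, if_neg (by omega)]; simp
      have hi1 : 1 ≤ i := by omega
      have him : i ≤ m := by omega
      rw [nj_mid m s hi1 him] at hj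
      have hsi := hs i hi1 him
      by_cases hj0 : j = 0
      · subst hj0
        have hs1 := hspos 1 le_rfl hm1
        rw [Di0_aa (n:=n) (ℓ:=ℓ) (L:=L) hi1 (by omega) 0 (by omega), if_neg (by omega),
          if_neg (by omega)]
        simp
      by_cases hjs : j = s i
      · subst hjs
        by_cases hi1' : i = 1
        · subst hi1'
          rw [if_pos ⟨rfl, rfl⟩]
        · rw [hK i (by omega) (by omega), if_neg (by tauto)]; simp
      have hj1 : 1 ≤ j := by omega
      have hju : j ≤ L i - L (i - 1) := by omega
      rw [Dmid_aa (n:=n) (ℓ:=ℓ) (L:=L) hi1 (by omega) hj1 hju (hub i him) 0 (by omega),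
        if_neg (by have := hlb (i - 1) (by omega); omega),
        if_neg (by rintro ⟨rfl, rfl⟩; omega)]
      simp
  -- Step 2 : middle variables via the arrows `a_{L t - u}`.
  have step2 : ∀ t u, 1 ≤ t → t ≤ m → 1 ≤ u → u ≤ s t - 1 → y (zidx m s t u) = 0 := by
    intro t u ht1 htm hu1 hus
    have hst := hs t ht1 htm
    have hu2 : u ≤ L t - L (t - 1) := by omega
    have hlbt : 1 ≤ L (t - 1) := hlb (t - 1) (by omega)
    have hubt : L t ≤ n := hub t htm
    have hw : L t - u ≤ n := by omega
    have e := hker (aa n ℓ (L t - u))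
    rw [double_sum_eq_single
        (fun i j => y (zidx m s i j) * ((Dvec n ℓ L i j (aa n ℓ (L t - u)) : ℕ) : ℤ))
        t u (by omega) (by rw [nj_mid m s ht1 htm]; omega) ?_] at e
    · beta_reduce at e
      have hD : Dvec n ℓ L t u (aa n ℓ (L t - u)) = 1 := by
        rw [Dmid_aa (n:=n) (ℓ:=ℓ) (L:=L) ht1 (by omega) hu1 hu2 hubt (L t - u) hw,
          if_pos rfl]
      rw [hD] at e
      simpa using e
    · intro i hi j hj
      beta_reduce
      by_cases hi0 : i = 0
      · subst hi0
        rw [nj_zero] at hj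
        have hj0 : j = 0 := by omega
        subst hj0
        rw [D00_aa, if_neg (by omega)]; simp
      by_cases hitop : i = m + 1
      · subst hitop
        rw [nj_top] at hj
        have hj0 : j = 0 := by omega
        subst hj0
        rw [hKtop, if_neg (by omega)]; simp
      have hi1 : 1 ≤ i := by omega
      have him : i ≤ m := by omega
      rw [nj_mid m s hi1 him] at hj
      have hsi := hs i hi1 him
      by_cases hj0 : j = 0
      · subst hj0
        rw [Di0_aa (n:=n) (ℓ:=ℓ) (L:=L) hi1 (by omega) (L t - u) hw, if_neg (by omega),
          if_neg (by rintro ⟨rfl, rfl⟩; omega)]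
        simp
      by_cases hjs : j = s i
      · subst hjs
        by_cases hi1' : i = 1
        · subst hi1'
          have hD : Dvec n ℓ L 1 (s 1) (aa n ℓ (L t - u)) = 0 := by
            rw [hs 1 le_rfl hm1,
              Dis_aa (n:=n) (ℓ:=ℓ) (L:=L) (i:=1) le_rfl (by omega)
                (by simpa using hub 0 (by omega)) (L t - u) hw]
            simp only [Nat.sub_self]
            rw [if_neg (by rw [hL0]; omega)]
          rw [hD, if_neg (by rintro ⟨rfl, rfl⟩; omega)]; simp
        · rw [hK i (by omega) (by omega), if_neg (by rintro ⟨rfl, rfl⟩; omega)]; simp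
      have hj1 : 1 ≤ j := by omega
      have hju : j ≤ L i - L (i - 1) := by omega
      by_cases hit : i = t ∧ j = u
      · obtain ⟨rfl, rfl⟩ := hit
        rw [if_pos ⟨rfl, rfl⟩]
      · have hne : L i - j ≠ L t - u := by
          rcases Nat.lt_trichotomy i t with hlt | heq | hgt
          · have h1 : L i ≤ L (t - 1) := hmono i (t - 1) (by omega) (by omega)
            omega
          · subst heq
            have : j ≠ u := by tauto
            omega
          · have h1 : L t ≤ L (i - 1) := hmono t (i - 1) (by omega) (by omega)
            omega
        rw [Dmid_aa (n:=n) (ℓ:=ℓ) (L:=L) hi1 (by omega) hj1 hju (hub i him) (L t - u) hw,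
          if_neg hne, if_neg hit]
        simp
  -- Step 3 : `y (zidx m 0) = 0` via the arrow `a_n`.
  have step3 : y (zidx m s m 0) = 0 := by
    have e := hker (aa n ℓ n)
    rw [double_sum_eq_single
        (fun i j => y (zidx m s i j) * ((Dvec n ℓ L i j (aa n ℓ n) : ℕ) : ℤ))
        m 0 (by omega) (by rw [nj_mid m s hm1 le_rfl]; omega) ?_] at e
    · beta_reduce at e
      have hD : Dvec n ℓ L m 0 (aa n ℓ n) = 1 := by
        rw [Di0_aa (n:=n) (ℓ:=ℓ) (L:=L) hm1 (by omega) n le_rfl, if_pos ⟨by omega, rfl⟩]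
      rw [hD] at e
      simpa using e
    · intro i hi j hj
      beta_reduce
      by_cases hi0 : i = 0
      · subst hi0
        rw [nj_zero] at hj
        have hj0 : j = 0 := by omega
        subst hj0
        rw [D00_aa, if_neg (by omega)]; simp
      by_cases hitop : i = m + 1
      · subst hitop
        rw [nj_top] at hj
        have hj0 : j = 0 := by omega
        subst hj0
        rw [hKtop, if_neg (by omega)]; simp
      have hi1 : 1 ≤ i := by omega
      have him : i ≤ m := by omega
      rw [nj_mid m s hi1 him] at hj
      have hsi := hs i hi1 him
      by_cases hj0 : j = 0
      · subst hj0
        by_cases him' : i = m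
        · subst him'
          rw [if_pos ⟨rfl, rfl⟩]
        · rw [Di0_aa (n:=n) (ℓ:=ℓ) (L:=L) hi1 (by omega) n le_rfl, if_neg (by omega),
            if_neg (by tauto)]
          simp
      by_cases hjs : j = s i
      · subst hjs
        by_cases hi1' : i = 1
        · subst hi1'
          have hD : Dvec n ℓ L 1 (s 1) (aa n ℓ n) = 0 := by
            rw [hs 1 le_rfl hm1,
              Dis_aa (n:=n) (ℓ:=ℓ) (L:=L) (i:=1) le_rfl (by omega)
                (by simpa using hub 0 (by omega)) n le_rfl]
            simp only [Nat.sub_self]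
            rw [if_neg (by rw [hL0]; omega)]
          rw [hD, if_neg (by have := hspos 1 le_rfl hm1; omega)]; simp
        · rw [hK i (by omega) (by omega),
            if_neg (by have := hspos i hi1 him; omega)]; simp
      have hj1 : 1 ≤ j := by omega
      have hju : j ≤ L i - L (i - 1) := by omega
      rw [Dmid_aa (n:=n) (ℓ:=ℓ) (L:=L) hi1 (by omega) hj1 hju (hub i him) n le_rfl,
        if_neg (by have := hub i him; have := hlb (i - 1) (by omega); omega),
        if_neg (by omega)]
      simp
  -- Step 4 : `y (zidx t 0) = 0` for `1 ≤ t ≤ ℓ`, via the extra arrows.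
  have step4 : ∀ t, 1 ≤ t → t ≤ ℓ → y (zidx m s t 0) = 0 := by
    intro t ht1 htl
    obtain ⟨f, hf⟩ : ∃ f : Fin ℓ, f.val = t - 1 := ⟨⟨t - 1, by omega⟩, rfl⟩
    have e := hker (Sum.inr (Sum.inr f))
    rw [double_sum_eq_single
        (fun i j => y (zidx m s i j) *
          ((Dvec n ℓ L i j (Sum.inr (Sum.inr f)) : ℕ) : ℤ))
        t 0 (by omega) (by rw [nj_mid m s ht1 (by omega)]; omega) ?_] at e
    · beta_reduce at e
      have hD : Dvec n ℓ L t 0 (Sum.inr (Sum.inr f)) = 1 := by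
        rw [Di0_ex (n:=n) (ℓ:=ℓ) (L:=L) ht1 (by omega), if_pos (by omega)]
      rw [hD] at e
      simpa using e
    · intro i hi j hj
      beta_reduce
      by_cases hi0 : i = 0
      · subst hi0
        rw [nj_zero] at hj
        have hj0 : j = 0 := by omega
        subst hj0
        rw [D00_ex, if_neg (by omega)]; simp
      by_cases hitop : i = m + 1
      · subst hitop
        rw [nj_top] at hj
        have hj0 : j = 0 := by omega
        subst hj0
        rw [hKtop, if_neg (by omega)]; simp
      have hi1 : 1 ≤ i := by omega
      have him : i ≤ m := by omega
      rw [nj_mid m s hi1 him] at hj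
      have hsi := hs i hi1 him
      by_cases hj0 : j = 0
      · subst hj0
        by_cases hit : i = t
        · subst hit
          rw [if_pos ⟨rfl, rfl⟩]
        · rw [Di0_ex (n:=n) (ℓ:=ℓ) (L:=L) hi1 (by omega), if_neg (by omega),
            if_neg (by tauto)]
          simp
      by_cases hjs : j = s i
      · subst hjs
        by_cases hit2 : i = t + 1
        · rw [hK i (by omega) (by omega),
            if_neg (by have := hspos i hi1 him; omega)]; simp
        · have hD : Dvec n ℓ L i (s i) (Sum.inr (Sum.inr f)) = 0 := by
            rw [hsi, Dis_ex (n:=n) (ℓ:=ℓ) (L:=L) hi1 (by omega), if_neg (by omega)]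
          rw [hD, if_neg (by have := hspos i hi1 him; omega)]; simp
      have hj1 : 1 ≤ j := by omega
      have hju : j ≤ L i - L (i - 1) := by omega
      rw [Dmid_ex (n:=n) (ℓ:=ℓ) (L:=L) hi1 (by omega) hj1 hju,
        if_neg (by omega)]
      simp
  -- Step 5 : `y (zidx 0 0) = 0` via the arrow `c_0`.
  have step5 : y (zidx m s 0 0) = 0 := by
    have e := hker (cc n ℓ 0)
    rw [double_sum_eq_single
        (fun i j => y (zidx m s i j) * ((Dvec n ℓ L i j (cc n ℓ 0) : ℕ) : ℤ))
        0 0 (by omega) (by rw [nj_zero]; omega) ?_] at e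
    · beta_reduce at e
      rw [D00_c0] at e
      simpa using e
    · intro i hi j hj
      beta_reduce
      by_cases hi0 : i = 0
      · subst hi0
        rw [nj_zero] at hj
        have hj0 : j = 0 := by omega
        subst hj0
        rw [if_pos ⟨rfl, rfl⟩]
      by_cases hitop : i = m + 1
      · subst hitop
        rw [nj_top] at hj
        have hj0 : j = 0 := by omega
        subst hj0
        rw [hKtop, if_neg (by omega)]; simp
      have hi1 : 1 ≤ i := by omega
      have him : i ≤ m := by omega
      rw [nj_mid m s hi1 him] at hj
      have hsi := hs i hi1 him
      by_cases hj0 : j = 0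
      · subst hj0
        have hy0 : y (zidx m s i 0) = 0 := by
          by_cases him' : i = m
          · subst him'; exact step3
          · exact step4 i hi1 (by omega)
        rw [hy0, if_neg (by omega)]; simp
      by_cases hjs : j = s i
      · subst hjs
        have hD : Dvec n ℓ L i (s i) (cc n ℓ 0) = 0 := by
          rw [hsi, Dis_c0 (n:=n) (ℓ:=ℓ) (L:=L) hi1 (by omega) hn1]
        rw [hD, if_neg (by omega)]; simp
      have hj1 : 1 ≤ j := by omega
      have hju : j ≤ L i - L (i - 1) := by omega
      rw [Dmid_c0 (n:=n) (ℓ:=ℓ) (L:=L) hi1 (by omega) hj1 hju (hlb (i - 1) (by omega))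
          (hub i him),
        if_neg (by omega)]
      simp
  -- Conclusion
  have key : ∀ iv jv, iv < m + 2 → jv < nj m s iv → y (zidx m s iv jv) = 0 := by
    intro iv jv hiv hjv
    by_cases hi0 : iv = 0
    · subst hi0
      rw [nj_zero] at hjv
      have hj0 : jv = 0 := by omega
      subst hj0
      exact step5
    by_cases hitop : iv = m + 1
    · subst hitop
      rw [nj_top] at hjv
      have hj0 : jv = 0 := by omega
      subst hj0
      exact hKtop
    have hi1 : 1 ≤ iv := by omega
    have him : iv ≤ m := by omega
    rw [nj_mid m s hi1 him] at hjv
    by_cases hj0 : jv = 0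
    · subst hj0
      by_cases him' : iv = m
      · subst him'; exact step3
      · exact step4 iv hi1 (by omega)
    by_cases hjs : jv = s iv
    · subst hjs
      by_cases hi1' : iv = 1
      · subst hi1'; exact step1
      · exact hK iv (by omega) (by omega)
    exact step2 iv jv hi1 him (by omega) (by omega)
  ext p
  obtain ⟨i, j⟩ := p
  have hy := key i.val j.val i.isLt j.isLt
  rw [zidx_eq m s i.isLt j.isLt] at hy
  simpa using hy

end Aux5
section Aux6
open Finset

lemma sum_shift_cc (n ℓ K : ℕ) :
    (∑ v ∈ Finset.Ico 1 K, Finsupp.single (cc n ℓ (v + 1)) (1 : ℕ))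
      = ∑ w ∈ Finset.Ico 2 (K + 1), Finsupp.single (cc n ℓ w) (1 : ℕ) := by
  refine Finset.sum_nbij' (fun v => v + 1) (fun w => w - 1) ?_ ?_ ?_ ?_ ?_
  · intro a ha; simp only [Finset.mem_Ico] at *; omega
  · intro a ha; simp only [Finset.mem_Ico] at *; omega
  · intro a ha; beta_reduce; omega
  · intro a ha; beta_reduce; simp only [Finset.mem_Ico] at ha; omega
  · intro a ha; rfl

lemma key_rel (n ℓ m : ℕ) (L s : ℕ → ℕ) (hn1 : 1 ≤ n) (hm : m = ℓ + 1)
    (hL0 : L 0 = 1) (hLtop : L m = n)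
    (hmono : ∀ a b : ℕ, a ≤ b → b ≤ m → L a ≤ L b)
    (hs : ∀ t, 1 ≤ t → t ≤ m → s t = L t - L (t - 1) + 1)
    (j : ℕ) (hj2 : 2 ≤ j) (hjm : j ≤ m + 1) :
    Dvec n ℓ L 0 0 + Dvec n ℓ L j (s j)
      = Dvec n ℓ L 1 (s 1)
        + (∑ t ∈ Finset.Icc 1 (j - 1), ∑ u ∈ Finset.Icc 1 (s t - 1), Dvec n ℓ L t u)
        + Dvec n ℓ L (j - 1) 0 := by
  have hub : ∀ t, t ≤ m → L t ≤ n := fun t ht => hLtop ▸ hmono t m ht le_rfl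
  have hlb : ∀ t, t ≤ m → 1 ≤ L t := fun t ht => hL0 ▸ hmono 0 t (Nat.zero_le t) ht
  have hm1 : 1 ≤ m := by omega
  have hK1 : 1 ≤ L (j - 1) := hlb (j - 1) (by omega)
  have hKn : L (j - 1) ≤ n := hub (j - 1) (by omega)
  have hD00 : Dvec n ℓ L 0 0 = ∑ v ∈ Finset.range (n + 1), Finsupp.single (cc n ℓ v) 1 := by
    rw [Dvec, if_pos rfl]
  have hDjs : Dvec n ℓ L j (s j)
      = (∑ v ∈ Finset.range (L (j - 1)), Finsupp.single (aa n ℓ v) 1)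
        + Finsupp.single (kArr n ℓ (j - 1)) 1 := by
    by_cases hjm' : j ≤ m
    · rw [hs j (by omega) hjm', Dvec, if_neg (by omega), if_neg (by omega),
        if_neg (by omega), if_pos rfl]
    · have hj' : j = m + 1 := by omega
      subst hj'
      rw [Dvec, if_neg (by omega), if_pos (by omega),
        show kArr n ℓ (m + 1 - 1) = aa n ℓ n from by
          rw [show m + 1 - 1 = m from rfl, kArr_top n (by omega)],
        show L (m + 1 - 1) = n from by rw [show m + 1 - 1 = m from rfl, hLtop],
        Finset.sum_range_succ]
  have hD1s : Dvec n ℓ L 1 (s 1)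
      = Finsupp.single (aa n ℓ 0) 1 + Finsupp.single (cc n ℓ 1) 1 := by
    rw [hs 1 le_rfl hm1, Dvec, if_neg (by omega), if_neg (by omega), if_neg (by omega),
      if_pos rfl]
    rw [show (1 : ℕ) - 1 = 0 from rfl, hL0, Finset.sum_range_one, kArr_zero]
  have hDj10 : Dvec n ℓ L (j - 1) 0
      = (Finsupp.single (cc n ℓ 0) 1
          + ∑ v ∈ Finset.Icc (L (j - 1) + 1) n, Finsupp.single (cc n ℓ v) 1)
        + Finsupp.single (kArr n ℓ (j - 1)) 1 := by
    rw [Dvec, if_neg (by omega), if_neg (by omega), if_pos rfl]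
  have hmid : ∀ t, 1 ≤ t → t ≤ m →
      (∑ u ∈ Finset.Icc 1 (s t - 1), Dvec n ℓ L t u)
        = ∑ v ∈ Finset.Ico (L (t - 1)) (L t),
            (Finsupp.single (cc n ℓ (v + 1)) 1 + Finsupp.single (aa n ℓ v) 1) := by
    intro t ht1 htm
    have hlt : L (t - 1) ≤ L t := hmono (t - 1) t (by omega) htm
    have hst : s t - 1 = L t - L (t - 1) := by rw [hs t ht1 htm]; omega
    rw [hst]
    refine Finset.sum_nbij' (fun u => L t - u) (fun v => L t - v) ?_ ?_ ?_ ?_ ?_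
    · intro a ha; simp only [Finset.mem_Icc, Finset.mem_Ico] at *; omega
    · intro a ha; simp only [Finset.mem_Icc, Finset.mem_Ico] at *; omega
    · intro a ha; beta_reduce; simp only [Finset.mem_Icc] at ha; omega
    · intro a ha; beta_reduce; simp only [Finset.mem_Ico] at ha; omega
    · intro a ha
      beta_reduce
      simp only [Finset.mem_Icc] at ha
      rw [Dvec, if_neg (by omega), if_neg (by omega), if_neg (by omega), if_neg (by omega)]
  have hmids : (∑ t ∈ Finset.Icc 1 (j - 1), ∑ u ∈ Finset.Icc 1 (s t - 1), Dvec n ℓ L t u)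
      = ∑ v ∈ Finset.Ico 1 (L (j - 1)),
          (Finsupp.single (cc n ℓ (v + 1)) 1 + Finsupp.single (aa n ℓ v) 1) := by
    have htel : ∀ k, k ≤ m →
        (∑ t ∈ Finset.Icc 1 k, ∑ v ∈ Finset.Ico (L (t - 1)) (L t),
            (Finsupp.single (cc n ℓ (v + 1)) 1 + Finsupp.single (aa n ℓ v) (1 : ℕ)))
          = ∑ v ∈ Finset.Ico (L 0) (L k),
              (Finsupp.single (cc n ℓ (v + 1)) 1 + Finsupp.single (aa n ℓ v) 1) := by
      intro k
      induction k with
      | zero => intro _; rw [Finset.Icc_eq_empty (by omega), Finset.Ico_self]; simp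
      | succ k ih =>
          intro hk
          rw [Finset.sum_Icc_succ_top (by omega), ih (by omega)]
          simp only [Nat.add_sub_cancel]
          exact Finset.sum_Ico_consecutive _ (hmono 0 k (by omega) (by omega))
            (hmono k (k + 1) (by omega) hk)
    rw [Finset.sum_congr rfl (fun t ht => hmid t (Finset.mem_Icc.mp ht).1
        (by have := (Finset.mem_Icc.mp ht).2; omega)),
      htel (j - 1) (by omega), hL0]
  rw [hD00, hDjs, hD1s, hDj10, hmids, Finset.sum_add_distrib]
  have eA : (∑ v ∈ Finset.range (L (j - 1)), Finsupp.single (aa n ℓ v) (1 : ℕ))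
      = Finsupp.single (aa n ℓ 0) 1
        + ∑ v ∈ Finset.Ico 1 (L (j - 1)), Finsupp.single (aa n ℓ v) 1 := by
    rw [Finset.range_eq_Ico,
      Finset.sum_eq_sum_Ico_succ_bot (by omega) (fun v => Finsupp.single (aa n ℓ v) 1)]
  have eC : (∑ v ∈ Finset.range (n + 1), Finsupp.single (cc n ℓ v) (1 : ℕ))
      = Finsupp.single (cc n ℓ 0) 1
        + (∑ v ∈ Finset.Ico 1 (L (j - 1) + 1), Finsupp.single (cc n ℓ v) 1)
        + (∑ v ∈ Finset.Ico (L (j - 1) + 1) (n + 1), Finsupp.single (cc n ℓ v) 1) := by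
    rw [add_assoc,
      Finset.sum_Ico_consecutive (fun w => Finsupp.single (cc n ℓ w) (1 : ℕ))
        (by omega : 1 ≤ L (j - 1) + 1) (by omega : L (j - 1) + 1 ≤ n + 1),
      Finset.range_eq_Ico,
      Finset.sum_eq_sum_Ico_succ_bot (by omega) (fun w => Finsupp.single (cc n ℓ w) (1 : ℕ))]
  have eC2 : (∑ v ∈ Finset.Ico 1 (L (j - 1) + 1), Finsupp.single (cc n ℓ v) (1 : ℕ))
      = Finsupp.single (cc n ℓ 1) 1
        + ∑ v ∈ Finset.Ico 1 (L (j - 1)), Finsupp.single (cc n ℓ (v + 1)) 1 := by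
    rw [Finset.sum_eq_sum_Ico_succ_bot (by omega) (fun v => Finsupp.single (cc n ℓ v) (1 : ℕ)),
      sum_shift_cc]
  have eC3 : (∑ v ∈ Finset.Icc (L (j - 1) + 1) n, Finsupp.single (cc n ℓ v) (1 : ℕ))
      = ∑ v ∈ Finset.Ico (L (j - 1) + 1) (n + 1), Finsupp.single (cc n ℓ v) 1 := by
    rw [← Finset.Ico_add_one_right_eq_Icc]
  rw [eA, eC, eC2, eC3]
  abel
end Aux6
/-- each `z_{i,j}` is a monomial `x^{d_{i,j}}` for a unique exponent vector
`d_{i,j} : Q_1 → ℕ`, and the kernel of the induced ℤ-linear map `Φ` is generated as an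
abelian group by the `m` vectors `v_j`, `2 ≤ j ≤ m+1`. -/
theorem kernel_of_exponent_map_generated_by_quasiminor_vectors
    -- the group 1/r(1,a) with r > a ≥ 1 coprime
    (r a : ℕ) (ha : 1 ≤ a) (hra : a < r) (hcop : Nat.Coprime r a)
    -- Hirzebruch–Jung expansions r/a = [α_1,…,α_n], r/(r−a) = [β_1,…,β_m]
    (n m ℓ : ℕ) (αs βs : List ℕ) (hn1 : 1 ≤ n)
    (hαlen : αs.length = n) (hα2 : ∀ x ∈ αs, 2 ≤ x)
    (hαcf : hjcf (αs.map (fun x => (x : ℚ))) = (r : ℚ) / (a : ℚ))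
    (hβlen : βs.length = m) (hβ2 : ∀ x ∈ βs, 2 ≤ x)
    (hβcf : hjcf (βs.map (fun x => (x : ℚ))) = (r : ℚ) / ((r : ℚ) - (a : ℚ)))
    -- ℓ = Σ(α_i − 2), e = ℓ + 3 = m + 2
    (hl : ℓ = ∑ i ∈ Finset.range n, (αs.getD i 0 - 2))
    (hm : m = ℓ + 1)
    -- l_h = tail vertex of k_h: weakly increasing, l_0 = 1, l_{ℓ+1} = n, with
    -- α_i − 2 of the extra arrows having tail i; Riemenschneider duality
    (L : ℕ → ℕ) (hL0 : L 0 = 1) (hLtop : L (ℓ + 1) = n)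
    (hLmono : ∀ h₁ h₂, h₁ ≤ h₂ → h₂ ≤ ℓ + 1 → L h₁ ≤ L h₂)
    (hLrange : ∀ h, 1 ≤ h → h ≤ ℓ → 1 ≤ L h ∧ L h ≤ n)
    (hmult : ∀ i, 1 ≤ i → i ≤ n →
      ((Finset.Icc 1 ℓ).filter (fun h => L h = i)).card = αs.getD (i - 1) 0 - 2)
    (hdual : ∀ t, 1 ≤ t → t ≤ m → βs.getD (t - 1) 0 = L t - L (t - 1) + 2) :
    (∃! d : ZIdx m (fun t => βs.getD (t - 1) 0 - 1) → (Arrow n ℓ →₀ ℕ),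
      ∀ p : ZIdx m (fun t => βs.getD (t - 1) 0 - 1),
        zmon n ℓ L p.1.val p.2.val = monomial (d p) (1 : ℂ)) ∧
    (∀ d : ZIdx m (fun t => βs.getD (t - 1) 0 - 1) → (Arrow n ℓ →₀ ℕ),
      (∀ p : ZIdx m (fun t => βs.getD (t - 1) 0 - 1),
        zmon n ℓ L p.1.val p.2.val = monomial (d p) (1 : ℂ)) →
      LinearMap.ker (PhiMap n ℓ m (fun t => βs.getD (t - 1) 0 - 1) d) =
        Submodule.span ℤ
          {v | ∃ j : ℕ, 2 ≤ j ∧ j ≤ m + 1 ∧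
            v = vRel m (fun t => βs.getD (t - 1) 0 - 1) j}) := by
  set sb : ℕ → ℕ := fun t => βs.getD (t - 1) 0 - 1 with hsb
  have hs' : ∀ t, 1 ≤ t → t ≤ m → sb t = L t - L (t - 1) + 1 := by
    intro t h1 h2
    have : sb t = βs.getD (t - 1) 0 - 1 := rfl
    rw [this, hdual t h1 h2]
    omega
  have hsm1' : sb (m + 1) = 0 := by
    have h0 : βs.getD (m + 1 - 1) 0 = 0 := by
      rw [List.getD_eq_default]
      omega
    have : sb (m + 1) = βs.getD (m + 1 - 1) 0 - 1 := rfl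
    rw [this, h0]
  have hLtop' : L m = n := by rw [hm]; exact hLtop
  have hmono' : ∀ a b : ℕ, a ≤ b → b ≤ m → L a ≤ L b := fun a b h1 h2 =>
    hLmono a b h1 (by omega)
  have hspos' : ∀ t, 1 ≤ t → t ≤ m → 1 ≤ sb t := fun t h1 h2 => by
    rw [hs' t h1 h2]; omega
  have hm1 : 1 ≤ m := by omega
  set D : ZIdx m sb → (Arrow n ℓ →₀ ℕ) := fun p => Dvec n ℓ L p.1.val p.2.val with hD
  have hzD : ∀ p : ZIdx m sb, zmon n ℓ L p.1.val p.2.val = monomial (D p) (1 : ℂ) :=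
    fun p => zmon_eq_monomial n ℓ L p.1.val p.2.val
  constructor
  · refine ⟨D, hzD, ?_⟩
    intro d' hd'
    funext p
    exact MvPolynomial.monomial_left_injective one_ne_zero ((hd' p).symm.trans (hzD p))
  · intro d hd
    have hdD : ∀ p, d p = D p := fun p =>
      MvPolynomial.monomial_left_injective one_ne_zero ((hd p).symm.trans (hzD p))
    have hvalid : ∀ t, 2 ≤ t → t ≤ m + 1 → sb t < nj m sb t := by
      intro t h2 hm'
      by_cases htm : t ≤ m
      · rw [nj_mid m sb (by omega) htm]; omega
      · have : t = m + 1 := by omega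
        subst this
        rw [nj_top, hsm1']; omega
    have hvalid1 : sb 1 < nj m sb 1 := by rw [nj_mid m sb le_rfl hm1]; omega
    have hphi_single : ∀ i j (hi : i < m + 2) (hj : j < nj m sb i),
        PhiMap n ℓ m sb d (Finsupp.single (zidx m sb i j) 1)
          = fun q => ((Dvec n ℓ L i j q : ℕ) : ℤ) := by
      intro i j hi hj
      rw [PhiMap, Finsupp.lsum_single, LinearMap.toSpanSingleton_apply, one_smul]
      rw [hdD (zidx m sb i j), hD]
      rw [zidx_eq m sb hi hj]
    have hphi_vrel : ∀ j, 2 ≤ j → j ≤ m + 1 → PhiMap n ℓ m sb d (vRel m sb j) = 0 := by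
      intro j hj2 hjm
      have hkey := key_rel n ℓ m L sb hn1 hm hL0 hLtop' hmono' hs' j hj2 hjm
      rw [vRel]
      simp only [map_sub, map_add, map_sum]
      rw [hphi_single 0 0 (by omega) (by rw [nj_zero]; omega),
        hphi_single j (sb j) (by omega) (hvalid j hj2 hjm),
        hphi_single 1 (sb 1) (by omega) hvalid1,
        hphi_single (j - 1) 0 (by omega)
          (by rw [nj_mid m sb (by omega) (by omega)]; omega)]
      rw [Finset.sum_congr rfl (fun t ht => Finset.sum_congr rfl (fun u hu =>
        hphi_single t u
          (by have := (Finset.mem_Icc.mp ht).2; omega)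
          (by
            have ht' := Finset.mem_Icc.mp ht
            have hu' := Finset.mem_Icc.mp hu
            rw [nj_mid m sb (by omega) (by omega)]
            omega)))]
      funext q
      have hkq : Dvec n ℓ L 0 0 q + Dvec n ℓ L j (sb j) q
          = Dvec n ℓ L 1 (sb 1) q
            + (∑ t ∈ Finset.Icc 1 (j - 1), ∑ u ∈ Finset.Icc 1 (sb t - 1),
                Dvec n ℓ L t u q)
            + Dvec n ℓ L (j - 1) 0 q := by
        have := DFunLike.congr_fun hkey q
        simpa [Finsupp.finset_sum_apply] using this
      simp only [Pi.sub_apply, Pi.add_apply, Finset.sum_apply, Pi.zero_apply]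
      have hcast := congrArg (Nat.cast : ℕ → ℤ) hkq
      push_cast at hcast
      linarith
    refine le_antisymm ?_ ?_
    · -- ker ≤ span
      intro x hx
      rw [LinearMap.mem_ker] at hx
      have hvrel_at : ∀ j t, 2 ≤ j → j ≤ m + 1 → 2 ≤ t → t ≤ m + 1 →
          (vRel m sb j) (zidx m sb t (sb t)) = if j = t then 1 else 0 := by
        intro j t hj2 hjm ht2 htm
        have hvt := hvalid t ht2 htm
        rw [vRel, Finsupp.sub_apply, Finsupp.sub_apply, Finsupp.sub_apply,
          Finsupp.add_apply]
        rw [show (Finsupp.single (zidx m sb 0 0) (1 : ℤ)) (zidx m sb t (sb t)) = 0 from by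
          rw [Finsupp.single_apply, if_neg]
          rw [zidx_inj m sb (by omega) (by rw [nj_zero]; omega) (by omega) hvt]
          omega]
        rw [show (Finsupp.single (zidx m sb j (sb j)) (1 : ℤ)) (zidx m sb t (sb t))
            = if j = t then 1 else 0 from by
          by_cases hjt : j = t
          · subst hjt
            rw [Finsupp.single_apply, if_pos rfl, if_pos rfl]
          · rw [Finsupp.single_apply, if_neg, if_neg hjt]
            rw [zidx_inj m sb (by omega) (hvalid j hj2 hjm) (by omega) hvt]
            omega]
        rw [show (Finsupp.single (zidx m sb 1 (sb 1)) (1 : ℤ)) (zidx m sb t (sb t)) = 0 from by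
          rw [Finsupp.single_apply, if_neg]
          rw [zidx_inj m sb (by omega) hvalid1 (by omega) hvt]
          omega]
        rw [show ((∑ t' ∈ Finset.Icc 1 (j - 1), ∑ u ∈ Finset.Icc 1 (sb t' - 1),
            Finsupp.single (zidx m sb t' u) (1 : ℤ))) (zidx m sb t (sb t)) = 0 from by
          rw [Finsupp.finset_sum_apply]
          refine Finset.sum_eq_zero fun t' ht' => ?_
          rw [Finsupp.finset_sum_apply]
          refine Finset.sum_eq_zero fun u hu => ?_
          have ht'' := Finset.mem_Icc.mp ht'
          have hu' := Finset.mem_Icc.mp hu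
          have hsp := hspos' t' (by omega) (by omega)
          rw [Finsupp.single_apply, if_neg]
          rw [zidx_inj m sb (by omega)
            (by rw [nj_mid m sb (by omega) (by omega)]; omega) (by omega) hvt]
          rintro ⟨rfl, h2⟩
          omega]
        rw [show (Finsupp.single (zidx m sb (j - 1) 0) (1 : ℤ)) (zidx m sb t (sb t)) = 0 from by
          rw [Finsupp.single_apply, if_neg]
          rw [zidx_inj m sb (by omega) (by rw [nj_mid m sb (by omega) (by omega)]; omega)
            (by omega) hvt]
          rintro ⟨h1, h2⟩
          have hsp := hspos' t (by omega) (by omega)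
          omega]
        simp
      set y := x - ∑ t ∈ Finset.Icc 2 (m + 1),
        (x (zidx m sb t (sb t))) • vRel m sb t with hy
      have hyv : ∀ t, 2 ≤ t → t ≤ m + 1 → y (zidx m sb t (sb t)) = 0 := by
        intro t h2 hm'
        rw [hy, Finsupp.sub_apply, Finsupp.finset_sum_apply]
        rw [Finset.sum_congr rfl (fun j hj => by
          rw [Finsupp.smul_apply,
            hvrel_at j t (Finset.mem_Icc.mp hj).1 (Finset.mem_Icc.mp hj).2 h2 hm',
            smul_eq_mul, mul_ite, mul_one, mul_zero])]
        rw [Finset.sum_ite_eq' (Finset.Icc 2 (m + 1)) t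
          (fun j => x (zidx m sb j (sb j))), if_pos (Finset.mem_Icc.mpr ⟨h2, hm'⟩)]
        simp
      have hyk : PhiMap n ℓ m sb d y = 0 := by
        rw [hy, map_sub, hx, map_sum]
        rw [Finset.sum_congr rfl (fun j hj => by
          rw [map_smul, hphi_vrel j (Finset.mem_Icc.mp hj).1 (Finset.mem_Icc.mp hj).2,
            smul_zero])]
        simp
      have hphi_eval : ∀ (z : ZIdx m sb →₀ ℤ) (q : Arrow n ℓ),
          PhiMap n ℓ m sb d z q
            = ∑ i ∈ Finset.range (m + 2), ∑ j ∈ Finset.range (nj m sb i),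
                (z (zidx m sb i j)) * ((Dvec n ℓ L i j q : ℕ) : ℤ) := by
        intro z q
        rw [phi_apply]
        refine Finset.sum_congr rfl fun i hi => Finset.sum_congr rfl fun j hj => ?_
        rw [hdD (zidx m sb i j), hD]
        rw [zidx_eq m sb (Finset.mem_range.mp hi) (Finset.mem_range.mp hj)]
      have hy0 : y = 0 := by
        refine elim_y n ℓ m L sb hn1 hm hL0 hLtop' hmono' hs' hsm1' y hyv ?_
        intro q
        have := congrFun hyk q
        rw [hphi_eval y q] at this
        simpa using this
      have hxe : x = ∑ t ∈ Finset.Icc 2 (m + 1),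
          (x (zidx m sb t (sb t))) • vRel m sb t := by
        have := sub_eq_zero.mp (hy ▸ hy0)
        exact this
      rw [hxe]
      refine Submodule.sum_mem _ fun t ht => Submodule.smul_mem _ _ ?_
      exact Submodule.subset_span
        ⟨t, (Finset.mem_Icc.mp ht).1, (Finset.mem_Icc.mp ht).2, rfl⟩
    · -- span ≤ ker
      rw [Submodule.span_le]
      rintro v ⟨j, hj2, hjm, rfl⟩
      exact LinearMap.mem_ker.mpr (hphi_vrel j hj2 hjm)
end

section
/- Assume a > 1 and λ ∈ Δ. The map x ↦ (x(c_{1,0}), x(a_{0,1})) is a bijection from the set of λ-representations x : Q_1 → ℂ satisfying x(c_{0,n}) = x(c_{n,n−1}) = ⋯ = x(c_{2,1}) = 1 onto ℂ². (This is the chart W_0 of the moduli space of the deformed reconstruction algebra A_{r,a,λ}, and it is isomorphic to affine 2-space.) -/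
/-- `x(C_{0,j})`: the value of `x` on the clockwise path from `0` to `j` (for `j ≥ 1`). -/
def xcPath (n ℓ : ℕ) (x : Arrow n ℓ → ℂ) (j : ℕ) : ℂ :=
  x (cc n ℓ 0) * ∏ v ∈ Finset.Icc (j + 1) n, x (cc n ℓ v)

/-- `x(A_{0,j})`: the value of `x` on the anticlockwise path from `0` to `j` (for `j ≥ 1`). -/
def xaPath (n ℓ : ℕ) (x : Arrow n ℓ → ℂ) (j : ℕ) : ℂ :=
  ∏ v ∈ Finset.range j, x (aa n ℓ v)

/-- A `λ`-representation of dimension vector `(1,…,1)`: a function `x : Q_1 → ℂ` satisfying,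
for each `1 ≤ i ≤ e−2 = ℓ+1` (writing `d_i = l_i − l_{i−1}`), the step-`i` relations of the
deformed reconstruction algebra `A_{r,a,λ}`. -/
def IsLamRep (n ℓ : ℕ) (L : ℕ → ℕ) (β : ℕ → ℕ) (lam : ℕ → ℕ → ℂ)
    (x : Arrow n ℓ → ℂ) : Prop :=
  ∀ i, 1 ≤ i → i ≤ ℓ + 1 →
    ((L i - L (i - 1) = 0 →
      x (kArr n ℓ i) * xcPath n ℓ x (L i)
          - x (kArr n ℓ (i - 1)) * xaPath n ℓ x (L (i - 1)) = lam i 1 ∧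
      xaPath n ℓ x (L (i - 1)) * x (kArr n ℓ (i - 1))
          - xcPath n ℓ x (L i) * x (kArr n ℓ i) = lam i 0) ∧
    (0 < L i - L (i - 1) →
      (x (kArr n ℓ i) * xcPath n ℓ x (L i)
          - x (cc n ℓ (L i)) * x (aa n ℓ (L i - 1)) = lam i (β i - 1)) ∧
      (∀ u, L (i - 1) + 1 ≤ u → u ≤ L i - 1 →
        x (aa n ℓ u) * x (cc n ℓ (u + 1)) - x (cc n ℓ u) * x (aa n ℓ (u - 1))
          = lam i (u - L (i - 1) + 1)) ∧
      (x (aa n ℓ (L (i - 1))) * x (cc n ℓ (L (i - 1) + 1))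
          - x (kArr n ℓ (i - 1)) * xaPath n ℓ x (L (i - 1)) = lam i 1) ∧
      (xaPath n ℓ x (L (i - 1)) * x (kArr n ℓ (i - 1))
          - xcPath n ℓ x (L i) * x (kArr n ℓ i) = lam i 0)))

/-- `λ ∈ Δ`: all the row sums `Σ_{j=0}^{β_i−1} λ_{i,j}` vanish. -/
def InDelta (ℓ : ℕ) (β : ℕ → ℕ) (lam : ℕ → ℕ → ℂ) : Prop :=
  ∀ i, 1 ≤ i → i ≤ ℓ + 1 → ∑ j ∈ Finset.range (β i), lam i j = 0

namespace ChartW0Proof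

noncomputable def Ssum (lam : ℕ → ℕ → ℂ) (i t : ℕ) : ℂ :=
  ∑ j ∈ Finset.range t, lam i (j + 1)

lemma Ssum_succ (lam : ℕ → ℕ → ℂ) (i t : ℕ) :
    Ssum lam i (t + 1) = Ssum lam i t + lam i (t + 1) :=
  Finset.sum_range_succ _ _

lemma Ssum_one (lam : ℕ → ℕ → ℂ) (i : ℕ) : Ssum lam i 1 = lam i 1 := by
  simp [Ssum]

noncomputable def KA (L : ℕ → ℕ) (lam : ℕ → ℕ → ℂ) (p q : ℂ) : ℕ → ℂ × ℂ
  | 0 => (p, q)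
  | i + 1 =>
      ((KA L lam p q i).2 * (KA L lam p q i).1 - lam (i + 1) 0,
       (KA L lam p q i).2 * ∏ u ∈ Finset.Ico (L i) (L (i + 1)),
          ((KA L lam p q i).1 * (KA L lam p q i).2 + Ssum lam (i + 1) (u - L i + 1)))

open Classical in
noncomputable def idx (L : ℕ → ℕ) (u : ℕ) : ℕ :=
  if h : ∃ i, u < L i then Nat.find h else 0

noncomputable def xa (n ℓ : ℕ) (L : ℕ → ℕ) (lam : ℕ → ℕ → ℂ) (p q : ℂ) (u : ℕ) : ℂ :=
  if u = 0 then q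
  else if n ≤ u then (KA L lam p q (ℓ + 1)).1
  else (KA L lam p q (idx L u - 1)).1 * (KA L lam p q (idx L u - 1)).2
        + Ssum lam (idx L u) (u - L (idx L u - 1) + 1)

noncomputable def xcon (n ℓ : ℕ) (L : ℕ → ℕ) (lam : ℕ → ℕ → ℂ) (p q : ℂ) :
    Arrow n ℓ → ℂ
  | Sum.inl v => if v.val = 1 then p else 1
  | Sum.inr (Sum.inl v) => xa n ℓ L lam p q v.val
  | Sum.inr (Sum.inr h) => (KA L lam p q (h.val + 1)).1

section Main

variable (n ℓ : ℕ) (L : ℕ → ℕ) (lam : ℕ → ℕ → ℂ)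

lemma xcPath_one (x : Arrow n ℓ → ℂ) (hc0 : x (cc n ℓ 0) = 1)
    (hcv : ∀ v, 2 ≤ v → v ≤ n → x (cc n ℓ v) = 1)
    (j : ℕ) (hj : 1 ≤ j) : xcPath n ℓ x j = 1 := by
  simp only [xcPath, hc0, one_mul]
  apply Finset.prod_eq_one
  intro v hv
  rw [Finset.mem_Icc] at hv
  exact hcv v (by omega) hv.2

lemma xaPath_split (x : Arrow n ℓ → ℂ) (a b : ℕ) (hab : a ≤ b) :
    xaPath n ℓ x b = xaPath n ℓ x a * ∏ v ∈ Finset.Ico a b, x (aa n ℓ v) := by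
  simp only [xaPath, Finset.range_eq_Ico]
  exact (Finset.prod_Ico_consecutive _ (Nat.zero_le a) hab).symm

lemma idx_eq (hLmono : ∀ h₁ h₂, h₁ ≤ h₂ → h₂ ≤ ℓ + 1 → L h₁ ≤ L h₂)
    (u i : ℕ) (hi1 : 1 ≤ i) (hi2 : i ≤ ℓ + 1) (h1 : L (i - 1) ≤ u) (h2 : u < L i) :
    idx L u = i := by
  have hex : ∃ j, u < L j := ⟨i, h2⟩
  classical rw [idx, dif_pos hex]
  have hle : Nat.find hex ≤ i := Nat.find_le h2
  rcases Nat.lt_or_ge (Nat.find hex) i with hlt | hge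
  · exfalso
    have hspec : u < L (Nat.find hex) := Nat.find_spec hex
    have : L (Nat.find hex) ≤ L (i - 1) := hLmono _ _ (by omega) (by omega)
    omega
  · omega

lemma idx_spec (hn1 : 1 ≤ n) (hL0 : L 0 = 1) (hLtop : L (ℓ + 1) = n)
    (u : ℕ) (hu1 : 1 ≤ u) (hun : u < n) :
    1 ≤ idx L u ∧ idx L u ≤ ℓ + 1 ∧ L (idx L u - 1) ≤ u ∧ u < L (idx L u) := by
  have hex : ∃ j, u < L j := ⟨ℓ + 1, by rw [hLtop]; exact hun⟩
  classical rw [idx, dif_pos hex]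
  have h1 : u < L (Nat.find hex) := Nat.find_spec hex
  have h2 : Nat.find hex ≤ ℓ + 1 := Nat.find_le (by rw [hLtop]; exact hun)
  have h3 : 1 ≤ Nat.find hex := by
    rcases Nat.eq_zero_or_pos (Nat.find hex) with h | h
    · rw [h, hL0] at h1; omega
    · exact h
  have h4 : L (Nat.find hex - 1) ≤ u := by
    by_contra hcon
    push_neg at hcon
    exact Nat.find_min hex (by omega) hcon
  exact ⟨h3, h2, h4, h1⟩

variable (p q : ℂ)

open Fin.NatCast in
lemma xcon_cc (v : ℕ) (hv : v ≤ n) :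
    xcon n ℓ L lam p q (cc n ℓ v) = if v = 1 then p else 1 := by
  show (if ((v : Fin (n + 1))).val = 1 then p else 1) = _
  rw [Fin.val_cast_of_lt (by omega)]

open Fin.NatCast in
lemma xcon_aa0 : xcon n ℓ L lam p q (aa n ℓ 0) = q := by
  show xa n ℓ L lam p q ((0 : Fin (n + 1))).val = q
  simp [xa]

open Fin.NatCast in
lemma xcon_k (hn1 : 1 ≤ n) (i : ℕ) (hi : i ≤ ℓ + 1) :
    xcon n ℓ L lam p q (kArr n ℓ i) = (KA L lam p q i).1 := by
  rcases Nat.eq_zero_or_pos i with h0 | h1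
  · subst h0
    rw [kArr, dif_neg (by omega), if_pos rfl]
    rw [xcon_cc n ℓ L lam p q 1 hn1, if_pos rfl]
    rfl
  · rcases Nat.lt_or_ge i (ℓ + 1) with hlt | hge
    · rw [kArr, dif_pos ⟨h1, by omega⟩]
      show (KA L lam p q ((i - 1) + 1)).1 = _
      congr 2
      omega
    · have hie : i = ℓ + 1 := by omega
      subst hie
      rw [kArr, dif_neg (by omega), if_neg (by omega)]
      show xa n ℓ L lam p q ((n : Fin (n + 1))).val = _
      rw [Fin.val_cast_of_lt (by omega)]
      rw [xa, if_neg (by omega), if_pos le_rfl]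

open Fin.NatCast in
lemma xcon_aa (hn1 : 1 ≤ n) (hL0 : L 0 = 1)
    (hLmono : ∀ h₁ h₂, h₁ ≤ h₂ → h₂ ≤ ℓ + 1 → L h₁ ≤ L h₂)
    (hLn : ∀ h, h ≤ ℓ + 1 → L h ≤ n)
    (u i : ℕ) (hi1 : 1 ≤ i) (hi2 : i ≤ ℓ + 1) (h1 : L (i - 1) ≤ u) (h2 : u < L i) :
    xcon n ℓ L lam p q (aa n ℓ u) =
      (KA L lam p q (i - 1)).1 * (KA L lam p q (i - 1)).2
        + Ssum lam i (u - L (i - 1) + 1) := by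
  have hLi1 : 1 ≤ L (i - 1) := by
    have := hLmono 0 (i - 1) (by omega) (by omega); omega
  have hun : u < n := lt_of_lt_of_le h2 (hLn i hi2)
  have hidx : idx L u = i := idx_eq ℓ L hLmono u i hi1 hi2 h1 h2
  show xa n ℓ L lam p q ((u : Fin (n + 1))).val = _
  rw [Fin.val_cast_of_lt (by omega)]
  rw [xa, if_neg (by omega), if_neg (by omega), hidx]

lemma xcon_xaPath (hn1 : 1 ≤ n) (hL0 : L 0 = 1)
    (hLmono : ∀ h₁ h₂, h₁ ≤ h₂ → h₂ ≤ ℓ + 1 → L h₁ ≤ L h₂)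
    (hLn : ∀ h, h ≤ ℓ + 1 → L h ≤ n) :
    ∀ i, i ≤ ℓ + 1 → xaPath n ℓ (xcon n ℓ L lam p q) (L i) = (KA L lam p q i).2 := by
  intro i
  induction i with
  | zero =>
    intro _
    rw [hL0]
    simp only [xaPath, Finset.prod_range_one]
    exact xcon_aa0 n ℓ L lam p q
  | succ i ih =>
    intro hi
    have hmon : L i ≤ L (i + 1) := hLmono i (i + 1) (by omega) hi
    rw [xaPath_split n ℓ _ (L i) (L (i + 1)) hmon, ih (by omega)]
    show _ = (KA L lam p q i).2 * _
    congr 1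
    refine Finset.prod_congr rfl ?_
    intro u hu
    rw [Finset.mem_Ico] at hu
    have := xcon_aa n ℓ L lam p q hn1 hL0 hLmono hLn u (i + 1) (by omega) hi
      (by simpa using hu.1) hu.2
    simpa using this

lemma xcon_rep (hn1 : 1 ≤ n) (hL0 : L 0 = 1)
    (hLmono : ∀ h₁ h₂, h₁ ≤ h₂ → h₂ ≤ ℓ + 1 → L h₁ ≤ L h₂)
    (hLn : ∀ h, h ≤ ℓ + 1 → L h ≤ n)
    (β : ℕ → ℕ)
    (hβ : ∀ i, 1 ≤ i → i ≤ ℓ + 1 → β i = L i - L (i - 1) + 2)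
    (hsum : ∀ i, 1 ≤ i → i ≤ ℓ + 1 → ∑ j ∈ Finset.range (β i), lam i j = 0) :
    IsLamRep n ℓ L β lam (xcon n ℓ L lam p q) := by
  intro i hi1 hi2
  set x := xcon n ℓ L lam p q with hxdef
  have hc0 : x (cc n ℓ 0) = 1 := by
    rw [hxdef, xcon_cc n ℓ L lam p q 0 (by omega), if_neg (by omega)]
  have hcv : ∀ v, 2 ≤ v → v ≤ n → x (cc n ℓ v) = 1 := by
    intro v hv2 hvn
    rw [hxdef, xcon_cc n ℓ L lam p q v hvn, if_neg (by omega)]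
  have hLi1 : 1 ≤ L (i - 1) := by
    have := hLmono 0 (i - 1) (by omega) (by omega); omega
  have hLin : L i ≤ n := hLn i hi2
  have hmon : L (i - 1) ≤ L i := hLmono (i - 1) i (by omega) hi2
  have hxc : xcPath n ℓ x (L i) = 1 := xcPath_one n ℓ x hc0 hcv (L i) (by omega)
  have hk1 : x (kArr n ℓ i) = (KA L lam p q i).1 := xcon_k n ℓ L lam p q hn1 i hi2
  have hk0 : x (kArr n ℓ (i - 1)) = (KA L lam p q (i - 1)).1 :=
    xcon_k n ℓ L lam p q hn1 (i - 1) (by omega)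
  have hA0 : xaPath n ℓ x (L (i - 1)) = (KA L lam p q (i - 1)).2 :=
    xcon_xaPath n ℓ L lam p q hn1 hL0 hLmono hLn (i - 1) (by omega)
  have hKi : (KA L lam p q i).1
      = (KA L lam p q (i - 1)).2 * (KA L lam p q (i - 1)).1 - lam i 0 := by
    obtain ⟨i', rfl⟩ : ∃ i', i = i' + 1 := ⟨i - 1, by omega⟩
    simp [KA]
  have hrow : lam i 0 + Ssum lam i (L i - L (i - 1) + 1) = 0 := by
    have h := hsum i hi1 hi2
    rw [hβ i hi1 hi2] at h
    rw [show L i - L (i - 1) + 2 = (L i - L (i - 1) + 1) + 1 by omega,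
      Finset.sum_range_succ'] at h
    rw [Ssum, add_comm]
    exact h
  constructor
  · intro hd
    have hLL : L i = L (i - 1) := by omega
    have hrow1 : lam i 0 + lam i 1 = 0 := by
      rw [hd, Ssum_one] at hrow; exact hrow
    refine ⟨?_, ?_⟩
    · rw [hxc, hk1, hk0, hA0, hKi]
      ring_nf
      linear_combination -hrow1
    · rw [hxc, hk1, hk0, hA0, hKi]
      ring
  · intro hd
    have hLi2 : 2 ≤ L i := by omega
    have haaL : x (aa n ℓ (L i - 1)) =
        (KA L lam p q (i - 1)).1 * (KA L lam p q (i - 1)).2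
          + Ssum lam i (L i - L (i - 1)) := by
      have := xcon_aa n ℓ L lam p q hn1 hL0 hLmono hLn (L i - 1) i hi1 hi2
        (by omega) (by omega)
      rw [show L i - 1 - L (i - 1) + 1 = L i - L (i - 1) by omega] at this
      exact this
    have hSd : Ssum lam i (L i - L (i - 1) + 1)
        = Ssum lam i (L i - L (i - 1)) + lam i (L i - L (i - 1) + 1) :=
      Ssum_succ lam i _
    refine ⟨?_, ?_, ?_, ?_⟩
    · rw [hxc, hk1, hKi, haaL, hcv (L i) hLi2 hLin,
        hβ i hi1 hi2, show L i - L (i - 1) + 2 - 1 = L i - L (i - 1) + 1 by omega]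
      linear_combination -hrow + hSd
    · intro u hu1 hu2
      have haau : x (aa n ℓ u) =
          (KA L lam p q (i - 1)).1 * (KA L lam p q (i - 1)).2
            + Ssum lam i (u - L (i - 1) + 1) :=
        xcon_aa n ℓ L lam p q hn1 hL0 hLmono hLn u i hi1 hi2 (by omega) (by omega)
      have haau1 : x (aa n ℓ (u - 1)) =
          (KA L lam p q (i - 1)).1 * (KA L lam p q (i - 1)).2
            + Ssum lam i (u - L (i - 1)) := by
        have := xcon_aa n ℓ L lam p q hn1 hL0 hLmono hLn (u - 1) i hi1 hi2
          (by omega) (by omega)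
        rw [show u - 1 - L (i - 1) + 1 = u - L (i - 1) by omega] at this
        exact this
      have hSu : Ssum lam i (u - L (i - 1) + 1)
          = Ssum lam i (u - L (i - 1)) + lam i (u - L (i - 1) + 1) :=
        Ssum_succ lam i _
      rw [haau, haau1, hcv (u + 1) (by omega) (by omega), hcv u (by omega) (by omega)]
      linear_combination hSu
    · have haaL0 : x (aa n ℓ (L (i - 1))) =
          (KA L lam p q (i - 1)).1 * (KA L lam p q (i - 1)).2 + lam i 1 := by
        have := xcon_aa n ℓ L lam p q hn1 hL0 hLmono hLn (L (i - 1)) i hi1 hi2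
          le_rfl (by omega)
        rw [show L (i - 1) - L (i - 1) + 1 = 1 by omega, Ssum_one] at this
        exact this
      rw [haaL0, hcv (L (i - 1) + 1) (by omega) (by omega), hk0, hA0]
      ring
    · rw [hxc, hk1, hk0, hA0, hKi]
      ring

lemma detP (hn1 : 1 ≤ n) (hL0 : L 0 = 1) (hLtop : L (ℓ + 1) = n)
    (hLmono : ∀ h₁ h₂, h₁ ≤ h₂ → h₂ ≤ ℓ + 1 → L h₁ ≤ L h₂)
    (hLn : ∀ h, h ≤ ℓ + 1 → L h ≤ n)
    (β : ℕ → ℕ) (x : Arrow n ℓ → ℂ)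
    (hx : IsLamRep n ℓ L β lam x)
    (hc0 : x (cc n ℓ 0) = 1)
    (hcv : ∀ v, 2 ≤ v → v ≤ n → x (cc n ℓ v) = 1)
    (hp : x (cc n ℓ 1) = p) (hq : x (aa n ℓ 0) = q) :
    ∀ i, i ≤ ℓ + 1 →
      x (kArr n ℓ i) = (KA L lam p q i).1 ∧
      xaPath n ℓ x (L i) = (KA L lam p q i).2 ∧
      ∀ u, 1 ≤ i → L (i - 1) ≤ u → u < L i →
        x (aa n ℓ u) = (KA L lam p q (i - 1)).1 * (KA L lam p q (i - 1)).2
          + Ssum lam i (u - L (i - 1) + 1) := by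
  intro i
  induction i with
  | zero =>
    intro _
    refine ⟨?_, ?_, ?_⟩
    · rw [kArr, dif_neg (by omega), if_pos rfl]
      exact hp
    · rw [hL0]
      simpa [xaPath, Finset.prod_range_one, KA] using hq
    · intro u hu; omega
  | succ i ih =>
    intro hi
    obtain ⟨hKk, hA, -⟩ := ih (by omega)
    have hrel := hx (i + 1) (by omega) hi
    have hmon : L i ≤ L (i + 1) := hLmono i (i + 1) (by omega) hi
    have hL1 : 1 ≤ L i := by
      have := hLmono 0 i (by omega) (by omega); omega
    have hLn' : L (i + 1) ≤ n := hLn (i + 1) hi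
    have hxc : xcPath n ℓ x (L (i + 1)) = 1 :=
      xcPath_one n ℓ x hc0 hcv (L (i + 1)) (by omega)
    rcases Nat.eq_zero_or_pos (L (i + 1) - L i) with hd | hd
    · have h0 := (hrel.1 hd).2
      simp only [Nat.add_sub_cancel] at h0
      have hEq : L (i + 1) = L i := by omega
      refine ⟨?_, ?_, ?_⟩
      · rw [hxc, hA, hKk, one_mul] at h0
        show _ = (KA L lam p q i).2 * (KA L lam p q i).1 - lam (i + 1) 0
        linear_combination -h0
      · rw [hEq, hA]
        show _ = (KA L lam p q i).2 * _
        rw [hEq, Finset.Ico_self, Finset.prod_empty, mul_one]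
      · intro u _ h2 h3
        simp only [Nat.add_sub_cancel] at h2
        omega
    · obtain ⟨hb1, hbmid, hb3, hb0⟩ := hrel.2 hd
      simp only [Nat.add_sub_cancel] at hb3 hb0 hbmid
      have hX : ∀ k, L i + k < L (i + 1) → x (aa n ℓ (L i + k)) =
          (KA L lam p q i).1 * (KA L lam p q i).2 + Ssum lam (i + 1) (k + 1) := by
        intro k
        induction k with
        | zero =>
          intro hk
          rw [hcv (L i + 1) (by omega) (by omega), hKk, hA] at hb3
          rw [Nat.add_zero, Ssum_one]
          linear_combination hb3
        | succ k ihk =>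
          intro hk
          have hmid := hbmid (L i + k + 1) (by omega) (by omega)
          rw [hcv (L i + k + 1 + 1) (by omega) (by omega),
            hcv (L i + k + 1) (by omega) (by omega)] at hmid
          simp only [Nat.add_sub_cancel] at hmid
          rw [show L i + k + 1 - L i + 1 = k + 2 by omega] at hmid
          rw [ihk (by omega)] at hmid
          have hS : Ssum lam (i + 1) (k + 2)
              = Ssum lam (i + 1) (k + 1) + lam (i + 1) (k + 2) := Ssum_succ lam _ _
          rw [show L i + (k + 1) = L i + k + 1 by omega]
          rw [show (k + 1) + 1 = k + 2 by omega]
          linear_combination hmid - hS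
      refine ⟨?_, ?_, ?_⟩
      · rw [hxc, hA, hKk, one_mul] at hb0
        show _ = (KA L lam p q i).2 * (KA L lam p q i).1 - lam (i + 1) 0
        linear_combination -hb0
      · rw [xaPath_split n ℓ x (L i) (L (i + 1)) hmon, hA]
        show _ = (KA L lam p q i).2 * _
        congr 1
        refine Finset.prod_congr rfl ?_
        intro u hu
        rw [Finset.mem_Ico] at hu
        have := hX (u - L i) (by omega)
        rw [show L i + (u - L i) = u by omega] at this
        rw [this]
      · intro u _ h2 h3
        simp only [Nat.add_sub_cancel] at h2 ⊢
        have := hX (u - L i) (by omega)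
        rw [show L i + (u - L i) = u by omega] at this
        exact this

open Fin.NatCast in
lemma det (hn1 : 1 ≤ n) (hL0 : L 0 = 1) (hLtop : L (ℓ + 1) = n)
    (hLmono : ∀ h₁ h₂, h₁ ≤ h₂ → h₂ ≤ ℓ + 1 → L h₁ ≤ L h₂)
    (hLn : ∀ h, h ≤ ℓ + 1 → L h ≤ n)
    (β : ℕ → ℕ) (x : Arrow n ℓ → ℂ)
    (hx : IsLamRep n ℓ L β lam x)
    (hc0 : x (cc n ℓ 0) = 1)
    (hcv : ∀ v, 2 ≤ v → v ≤ n → x (cc n ℓ v) = 1)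
    (hp : x (cc n ℓ 1) = p) (hq : x (aa n ℓ 0) = q) :
    x = xcon n ℓ L lam p q := by
  have P := detP n ℓ L lam p q hn1 hL0 hLtop hLmono hLn β x hx hc0 hcv hp hq
  funext ar
  rcases ar with v | v | h
  · have hv : (Sum.inl v : Arrow n ℓ) = cc n ℓ v.val := by
      simp [cc, Fin.cast_val_eq_self]
    rw [hv, xcon_cc n ℓ L lam p q v.val (by omega)]
    by_cases h1 : v.val = 1
    · rw [h1, hp, if_pos rfl]
    · rw [if_neg h1]
      rcases Nat.eq_zero_or_pos v.val with h0 | h2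
      · rw [h0]; exact hc0
      · exact hcv v.val (by omega) (by omega)
  · have hv : (Sum.inr (Sum.inl v) : Arrow n ℓ) = aa n ℓ v.val := by
      simp [aa, Fin.cast_val_eq_self]
    have hvn : v.val ≤ n := by omega
    rcases Nat.eq_zero_or_pos v.val with h0 | h1
    · rw [hv, h0, hq]
      exact (xcon_aa0 n ℓ L lam p q).symm
    · rcases Nat.lt_or_ge v.val n with hlt | hge
      · obtain ⟨hs1, hs2, hs3, hs4⟩ := idx_spec n ℓ L hn1 hL0 hLtop v.val h1 hlt
        have heq := (P (idx L v.val) hs2).2.2 v.val hs1 hs3 hs4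
        rw [hv, heq]
        have hun : v.val < n := hlt
        show _ = xa n ℓ L lam p q ((v.val : Fin (n + 1))).val
        rw [Fin.val_cast_of_lt (by omega)]
        rw [xa, if_neg (by omega), if_neg (by omega)]
      · have hvn' : v.val = n := by omega
        have hkA : kArr n ℓ (ℓ + 1) = aa n ℓ n := by
          rw [kArr, dif_neg (by omega), if_neg (by omega)]
        have := (P (ℓ + 1) le_rfl).1
        rw [hkA] at this
        rw [hv, hvn', this]
        show _ = xa n ℓ L lam p q ((n : Fin (n + 1))).val
        rw [Fin.val_cast_of_lt (by omega)]
        rw [xa, if_neg (by omega), if_pos le_rfl]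
  · have hkA : kArr n ℓ (h.val + 1) = Sum.inr (Sum.inr h) := by
      rw [kArr, dif_pos ⟨by omega, by have := h.isLt; omega⟩]
      rfl
    have := (P (h.val + 1) (by have := h.isLt; omega)).1
    rw [hkA] at this
    rw [this]
    rfl

theorem core (β : ℕ → ℕ)
    (hn1 : 1 ≤ n) (hL0 : L 0 = 1) (hLtop : L (ℓ + 1) = n)
    (hLmono : ∀ h₁ h₂, h₁ ≤ h₂ → h₂ ≤ ℓ + 1 → L h₁ ≤ L h₂)
    (hLn : ∀ h, h ≤ ℓ + 1 → L h ≤ n)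
    (hβ : ∀ i, 1 ≤ i → i ≤ ℓ + 1 → β i = L i - L (i - 1) + 2)
    (hsum : ∀ i, 1 ≤ i → i ≤ ℓ + 1 → ∑ j ∈ Finset.range (β i), lam i j = 0) :
    Function.Bijective
      (fun x : {x : Arrow n ℓ → ℂ //
          IsLamRep n ℓ L β lam x ∧
          x (cc n ℓ 0) = 1 ∧ ∀ v, 2 ≤ v → v ≤ n → x (cc n ℓ v) = 1} =>
        ((x.val (cc n ℓ 1), x.val (aa n ℓ 0)) : ℂ × ℂ)) := by
  rw [Function.bijective_iff_existsUnique]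
  rintro ⟨p, q⟩
  have hc0' : xcon n ℓ L lam p q (cc n ℓ 0) = 1 := by
    rw [xcon_cc n ℓ L lam p q 0 (by omega), if_neg (by omega)]
  have hcv' : ∀ v, 2 ≤ v → v ≤ n → xcon n ℓ L lam p q (cc n ℓ v) = 1 := by
    intro v hv2 hvn
    rw [xcon_cc n ℓ L lam p q v hvn, if_neg (by omega)]
  refine ⟨⟨xcon n ℓ L lam p q,
    xcon_rep n ℓ L lam p q hn1 hL0 hLmono hLn β hβ hsum, hc0', hcv'⟩, ?_, ?_⟩
  · show (xcon n ℓ L lam p q (cc n ℓ 1), xcon n ℓ L lam p q (aa n ℓ 0)) = (p, q)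
    rw [xcon_cc n ℓ L lam p q 1 hn1, if_pos rfl, xcon_aa0 n ℓ L lam p q]
  · rintro ⟨x, hx, hc0, hcv⟩ hval
    simp only [Prod.mk.injEq] at hval
    exact Subtype.ext
      (det n ℓ L lam p q hn1 hL0 hLtop hLmono hLn β x hx hc0 hcv hval.1 hval.2)

end Main

end ChartW0Proof

/-- for `a > 1` and `λ ∈ Δ`, the map `x ↦ (x(c_{1,0}), x(a_{0,1}))` is a
bijection from the set of `λ`-representations with
`x(c_{0,n}) = x(c_{n,n−1}) = ⋯ = x(c_{2,1}) = 1` onto `ℂ²` (the chart `W_0`). -/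
theorem chart_W0_bijective
    -- the group 1/r(1,a) with r > a ≥ 1 coprime
    (r a : ℕ) (ha : 1 ≤ a) (hra : a < r) (hcop : Nat.Coprime r a)
    -- Hirzebruch–Jung expansions r/a = [α_1,…,α_n], r/(r−a) = [β_1,…,β_m]
    (n m ℓ : ℕ) (αs βs : List ℕ) (hn1 : 1 ≤ n)
    (hαlen : αs.length = n) (hα2 : ∀ x ∈ αs, 2 ≤ x)
    (hαcf : hjcf (αs.map (fun x => (x : ℚ))) = (r : ℚ) / (a : ℚ))
    (hβlen : βs.length = m) (hβ2 : ∀ x ∈ βs, 2 ≤ x)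
    (hβcf : hjcf (βs.map (fun x => (x : ℚ))) = (r : ℚ) / ((r : ℚ) - (a : ℚ)))
    -- ℓ = Σ(α_i − 2), e = ℓ + 3 = m + 2
    (hl : ℓ = ∑ i ∈ Finset.range n, (αs.getD i 0 - 2))
    (hm : m = ℓ + 1)
    -- l_h = tail vertex of k_h: weakly increasing, l_0 = 1, l_{ℓ+1} = n, with
    -- α_i − 2 of the extra arrows having tail i; Riemenschneider duality
    (L : ℕ → ℕ) (hL0 : L 0 = 1) (hLtop : L (ℓ + 1) = n)
    (hLmono : ∀ h₁ h₂, h₁ ≤ h₂ → h₂ ≤ ℓ + 1 → L h₁ ≤ L h₂)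
    (hLrange : ∀ h, 1 ≤ h → h ≤ ℓ → 1 ≤ L h ∧ L h ≤ n)
    (hmult : ∀ i, 1 ≤ i → i ≤ n →
      ((Finset.Icc 1 ℓ).filter (fun h => L h = i)).card = αs.getD (i - 1) 0 - 2)
    (hdual : ∀ t, 1 ≤ t → t ≤ m → βs.getD (t - 1) 0 = L t - L (t - 1) + 2)
    -- a > 1
    (ha1 : 1 < a)
    -- λ ∈ Δ
    (lam : ℕ → ℕ → ℂ) (hlam : InDelta ℓ (fun t => βs.getD (t - 1) 0) lam) :
    Function.Bijective
      (fun x : {x : Arrow n ℓ → ℂ //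
          IsLamRep n ℓ L (fun t => βs.getD (t - 1) 0) lam x ∧
          x (cc n ℓ 0) = 1 ∧ ∀ v, 2 ≤ v → v ≤ n → x (cc n ℓ v) = 1} =>
        ((x.val (cc n ℓ 1), x.val (aa n ℓ 0)) : ℂ × ℂ)) := by
  apply ChartW0Proof.core n ℓ L lam (fun t => βs.getD (t - 1) 0) hn1 hL0 hLtop hLmono
  · intro h hh
    rcases Nat.eq_zero_or_pos h with h0 | h1
    · rw [h0, hL0]; exact hn1
    · rcases Nat.lt_or_ge h (ℓ + 1) with hlt | hge
      · exact (hLrange h h1 (by omega)).2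
      · have : h = ℓ + 1 := by omega
        rw [this, hLtop]
  · intro i hi1 hi2
    exact hdual i hi1 (by omega)
  · intro i hi1 hi2
    exact hlam i hi1 hi2
end
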